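/- arXiv:1712.05250 — 5 statements merged into one kernel-verified Lean document; each statement's English description precedes it below -/
import Mathlib

section
/- For every natural number n, the sum of binomial coefficients binom(n, i) over all i with 0 ≤ i ≤ n/4 is at most 2^n · e^{-n/8}. -/
open Finset

theorem chernoff_binomial (n : ℕ) :
    (∑ i ∈ Finset.range (n / 4 + 1), (n.choose i : ℝ)) ≤ 2 ^ n * Real.exp (-(n : ℝ) / 8) := by
  have h1 : (∑ i ∈ Finset.range (n / 4 + 1), (n.choose i : ℝ)) ≤
      (3 : ℝ) ^ (n / 4) * ∑ i ∈ Finset.range (n + 1), (1/3 : ℝ) ^ i * (n.choose i : ℝ) := by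
    rw [Finset.mul_sum]
    calc (∑ i ∈ Finset.range (n / 4 + 1), (n.choose i : ℝ))
        ≤ ∑ i ∈ Finset.range (n / 4 + 1), (3:ℝ) ^ (n/4) * ((1/3:ℝ)^i * (n.choose i : ℝ)) := by
          apply Finset.sum_le_sum
          intro i hi
          have hi' : i ≤ n / 4 := Nat.lt_succ_iff.mp (Finset.mem_range.mp hi)
          have : (1:ℝ) ≤ (3:ℝ)^(n/4) * (1/3:ℝ)^i := by
            rw [one_div, inv_pow, ← div_eq_mul_inv, le_div_iff₀ (by positivity), one_mul]
            exact_mod_cast pow_le_pow_right₀ (by norm_num) hi'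
          calc (n.choose i : ℝ) = 1 * (n.choose i : ℝ) := (one_mul _).symm
            _ ≤ ((3:ℝ)^(n/4) * (1/3:ℝ)^i) * (n.choose i : ℝ) := by
                apply mul_le_mul_of_nonneg_right this (by positivity)
            _ = (3:ℝ)^(n/4) * ((1/3:ℝ)^i * (n.choose i : ℝ)) := by ring
      _ ≤ ∑ i ∈ Finset.range (n + 1), (3:ℝ) ^ (n/4) * ((1/3:ℝ)^i * (n.choose i : ℝ)) := by
          apply Finset.sum_le_sum_of_subset_of_nonneg
          · exact Finset.range_subset_range.mpr (by omega)
          · intro i _ _; positivity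
  have h2 : (∑ i ∈ Finset.range (n + 1), (1/3 : ℝ) ^ i * (n.choose i : ℝ)) = (4/3 : ℝ)^n := by
    have := add_pow (1/3 : ℝ) 1 n
    simp only [one_pow, mul_one] at this
    rw [← this]; norm_num
  have h3 : (3 : ℝ) ^ (n / 4) ≤ ((3:ℝ) ^ ((1:ℝ)/4)) ^ n := by
    have : (3:ℝ) ^ (n/4) = (3:ℝ) ^ ((n/4 : ℕ) : ℝ) := (Real.rpow_natCast 3 (n/4)).symm
    rw [this, ← Real.rpow_natCast ((3:ℝ) ^ ((1:ℝ)/4)) n, ← Real.rpow_mul (by norm_num)]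
    apply Real.rpow_le_rpow_of_exponent_le (by norm_num)
    have := Nat.cast_div_le (m := n) (n := 4) (α := ℝ)
    push_cast at this ⊢
    linarith
  have key : (3:ℝ) ^ ((1:ℝ)/4) * (4/3) ≤ 2 * Real.exp (-(1:ℝ)/8) := by
    have h8 : ((3:ℝ) ^ ((1:ℝ)/4) * (4/3)) ^ 8 ≤ (2 * Real.exp (-(1:ℝ)/8)) ^ 8 := by
      rw [mul_pow, mul_pow, ← Real.rpow_natCast ((3:ℝ) ^ ((1:ℝ)/4)) 8,
        ← Real.rpow_mul (by norm_num), ← Real.exp_nat_mul]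
      norm_num
      rw [Real.exp_neg, mul_comm, inv_mul_eq_div, le_div_iff₀ (Real.exp_pos 1)]
      nlinarith [Real.exp_one_lt_d9, Real.exp_pos 1]
    have h1' : (0:ℝ) ≤ (3:ℝ) ^ ((1:ℝ)/4) * (4/3) := by positivity
    have h2' : (0:ℝ) ≤ 2 * Real.exp (-(1:ℝ)/8) := by positivity
    exact le_of_pow_le_pow_left₀ (by norm_num) h2' h8
  calc (∑ i ∈ Finset.range (n / 4 + 1), (n.choose i : ℝ))
      ≤ (3 : ℝ) ^ (n / 4) * (4/3 : ℝ)^n := by rw [← h2]; exact h1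
    _ ≤ ((3:ℝ) ^ ((1:ℝ)/4)) ^ n * (4/3 : ℝ)^n := by
        apply mul_le_mul_of_nonneg_right h3 (by positivity)
    _ = ((3:ℝ) ^ ((1:ℝ)/4) * (4/3)) ^ n := (mul_pow _ _ _).symm
    _ ≤ (2 * Real.exp (-(1:ℝ)/8)) ^ n := pow_le_pow_left₀ (by positivity) key n
    _ = 2 ^ n * Real.exp (-(n : ℝ) / 8) := by
        rw [mul_pow, ← Real.exp_nat_mul]; ring_nf
end

section
/- For every real number a there exist constants c, C > 0 (depending only on a) such that for all s ≥ 0: c · e^s/(1+s)^a ≤ Σ_{k=0}^{∞} (s^k/k!) · 1/(k+1)^a ≤ C · e^s/(1+s)^a. -/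
open Real
private lemma hasSum_exp_real (x : ℝ) :
    HasSum (fun k : ℕ => x ^ k / (Nat.factorial k : ℝ)) (Real.exp x) := by
  rw [Real.exp_eq_exp_ℝ]
  exact NormedSpace.expSeries_div_hasSum_exp x

private lemma descFact_pow_bound (m k : ℕ) :
    (k + 1) ^ m ≤ (2 * m) ^ m + 2 ^ m * Nat.descFactorial k m := by
  rcases le_or_gt (k + 1) (2 * m) with h | h
  · exact le_add_right (Nat.pow_le_pow_left h m)
  · calc (k + 1) ^ m ≤ (2 * (k + 1 - m)) ^ m := Nat.pow_le_pow_left (by omega) m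
      _ = 2 ^ m * (k + 1 - m) ^ m := mul_pow 2 _ m
      _ ≤ 2 ^ m * Nat.descFactorial k m :=
          Nat.mul_le_mul_left _ (Nat.pow_sub_le_descFactorial k m)
      _ ≤ _ := Nat.le_add_left _ _

private lemma hasSum_descFact (m : ℕ) (x : ℝ) :
    HasSum (fun k : ℕ => (Nat.descFactorial k m : ℝ) * x ^ k / (Nat.factorial k : ℝ))
      (x ^ m * Real.exp x) := by
  have hinj : Function.Injective (fun j : ℕ => j + m) := add_left_injective m
  have h0 : ∀ k ∉ Set.range (fun j : ℕ => j + m),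
      (Nat.descFactorial k m : ℝ) * x ^ k / (Nat.factorial k : ℝ) = 0 := by
    intro k hk
    have hkm : k < m := by
      by_contra h
      exact hk ⟨k - m, by simp; omega⟩
    rw [Nat.descFactorial_eq_zero_iff_lt.2 hkm]
    simp
  rw [← hinj.hasSum_iff h0]
  have key : ∀ j : ℕ, (Nat.descFactorial (j + m) m : ℝ) * x ^ (j + m) /
      (Nat.factorial (j + m) : ℝ) = x ^ m * (x ^ j / (Nat.factorial j : ℝ)) := by
    intro j
    have h1 : Nat.factorial j * Nat.descFactorial (j + m) m = Nat.factorial (j + m) := by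
      have := Nat.factorial_mul_descFactorial (show m ≤ j + m by omega)
      simpa using this
    have h1' : (Nat.factorial j : ℝ) * (Nat.descFactorial (j + m) m : ℝ)
        = (Nat.factorial (j + m) : ℝ) := by exact_mod_cast congrArg Nat.cast h1
    have hj : (Nat.factorial j : ℝ) ≠ 0 := Nat.cast_ne_zero.2 (Nat.factorial_ne_zero j)
    have hjm : (Nat.factorial (j + m) : ℝ) ≠ 0 := Nat.cast_ne_zero.2 (Nat.factorial_ne_zero _)
    field_simp
    rw [pow_add]
    linear_combination (x ^ j * x ^ m) * h1'
  simp only [Function.comp_def, key]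
  exact (hasSum_exp_real x).mul_left _

private lemma poly_le_exp (n : ℕ) {δ : ℝ} (hδ : 0 < δ) :
    ∃ C : ℝ, 0 < C ∧ ∀ s : ℝ, 0 ≤ s → (1 + s) ^ n ≤ C * Real.exp (δ * s) := by
  refine ⟨(Nat.factorial n : ℝ) / δ ^ n * Real.exp δ, by positivity, fun s hs => ?_⟩
  have h1 : (δ * (1 + s)) ^ n / (Nat.factorial n : ℝ) ≤ Real.exp (δ * (1 + s)) :=
    le_hasSum (hasSum_exp_real (δ * (1 + s))) n (fun j _ => by positivity)
  have hfn : (0:ℝ) < (Nat.factorial n : ℝ) := by positivity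
  rw [div_le_iff₀ hfn, mul_pow] at h1
  have h2 : Real.exp (δ * (1 + s)) = Real.exp δ * Real.exp (δ * s) := by
    rw [mul_add, mul_one, Real.exp_add]
  rw [h2] at h1
  rw [div_mul_eq_mul_div, div_mul_eq_mul_div, le_div_iff₀ (by positivity : (0:ℝ) < δ ^ n)]
  nlinarith [h1, pow_pos hδ n, Real.exp_pos δ, Real.exp_pos (δ * s)]

private lemma tsum_le_hasSum {f g : ℕ → ℝ} {B : ℝ} (hf : ∀ k, 0 ≤ f k)
    (hfg : ∀ k, f k ≤ g k) (hg : HasSum g B) :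
    Summable f ∧ (∑' k, f k) ≤ B := by
  have hs : Summable f := Summable.of_nonneg_of_le hf hfg hg.summable
  exact ⟨hs, hg.tsum_eq ▸ Summable.tsum_le_tsum hfg hs hg.summable⟩


set_option maxHeartbeats 1000000 in
private lemma upper_bound (t : ℝ) :
    ∃ C : ℝ, 0 < C ∧ ∀ s : ℝ, 0 ≤ s →
      Summable (fun k : ℕ => s ^ k / (Nat.factorial k : ℝ) * ((k : ℝ) + 1) ^ t) ∧
      (∑' k : ℕ, s ^ k / (Nat.factorial k : ℝ) * ((k : ℝ) + 1) ^ t) ≤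
        C * (Real.exp s * (1 + s) ^ t) := by
  rcases le_or_gt t 0 with ht | ht
  · -- t ≤ 0
    have hδ : (0:ℝ) < (1 - Real.log 2) / 2 := by
      have := Real.log_two_lt_d9
      norm_num at this ⊢
      linarith
    obtain ⟨Cp, hCp, hP⟩ := poly_le_exp ⌈-t⌉₊ hδ
    have h2t : (0:ℝ) < (2:ℝ) ^ (-t) := Real.rpow_pos_of_pos two_pos _
    refine ⟨(2:ℝ) ^ (-t) + Cp, by positivity, fun s hs => ?_⟩
    have h1s : (0:ℝ) < 1 + s := by linarith
    have hrp : (0:ℝ) < (1 + s) ^ t := Real.rpow_pos_of_pos h1s t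
    set g : ℕ → ℝ := fun k =>
      (2:ℝ) ^ (-t) * (1 + s) ^ t * (s ^ k / (Nat.factorial k : ℝ)) +
        Real.exp (Real.log 2 / 2 * s) * ((s / 2) ^ k / (Nat.factorial k : ℝ)) with hgdef
    have hg : HasSum g ((2:ℝ) ^ (-t) * (1 + s) ^ t * Real.exp s +
        Real.exp (Real.log 2 / 2 * s) * Real.exp (s / 2)) :=
      ((hasSum_exp_real s).mul_left _).add ((hasSum_exp_real (s / 2)).mul_left _)
    have hfnn : ∀ k : ℕ, 0 ≤ s ^ k / (Nat.factorial k : ℝ) * ((k : ℝ) + 1) ^ t := by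
      intro k
      have : (0:ℝ) < ((k : ℝ) + 1) ^ t := Real.rpow_pos_of_pos (by positivity) t
      positivity
    have hpt : ∀ k : ℕ, s ^ k / (Nat.factorial k : ℝ) * ((k : ℝ) + 1) ^ t ≤ g k := by
      intro k
      have hk1 : (0:ℝ) < (k : ℝ) + 1 := by positivity
      have hsknn : (0:ℝ) ≤ s ^ k / (Nat.factorial k : ℝ) := by positivity
      have hs2nn : (0:ℝ) ≤ (s / 2) ^ k / (Nat.factorial k : ℝ) := by positivity
      rcases le_or_gt ((1 + s) / 2) ((k : ℝ) + 1) with hc | hc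
      · have hb : ((k : ℝ) + 1) ^ t ≤ ((1 + s) / 2) ^ t :=
          Real.rpow_le_rpow_of_nonpos (by linarith) hc ht
        have he : ((1 + s) / 2) ^ t = (1 + s) ^ t * (2:ℝ) ^ (-t) := by
          rw [Real.div_rpow h1s.le (by norm_num), Real.rpow_neg (by norm_num), div_eq_mul_inv]
        have h1 : s ^ k / (Nat.factorial k : ℝ) * ((k : ℝ) + 1) ^ t ≤
            (2:ℝ) ^ (-t) * (1 + s) ^ t * (s ^ k / (Nat.factorial k : ℝ)) := by
          have := mul_le_mul_of_nonneg_left (he ▸ hb) hsknn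
          nlinarith [this]
        have h2 : (0:ℝ) ≤ Real.exp (Real.log 2 / 2 * s) * ((s / 2) ^ k / (Nat.factorial k : ℝ)) := by
          positivity
        rw [hgdef]; dsimp only; linarith
      · have hkle : (k : ℝ) ≤ s / 2 := by linarith
        have hb1 : ((k : ℝ) + 1) ^ t ≤ 1 :=
          Real.rpow_le_one_of_one_le_of_nonpos (by linarith) ht
        have h2k : (2:ℝ) ^ k ≤ Real.exp (Real.log 2 / 2 * s) := by
          have h1 : (2:ℝ) ^ (k : ℝ) ≤ (2:ℝ) ^ (s / 2) :=
            Real.rpow_le_rpow_of_exponent_le one_le_two hkle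
          rw [Real.rpow_natCast] at h1
          calc (2:ℝ) ^ k ≤ (2:ℝ) ^ (s / 2) := h1
            _ = Real.exp (Real.log 2 * (s / 2)) := Real.rpow_def_of_pos two_pos _
            _ = Real.exp (Real.log 2 / 2 * s) := by congr 1; ring
        have hsk : s ^ k / (Nat.factorial k : ℝ) =
            (2:ℝ) ^ k * ((s / 2) ^ k / (Nat.factorial k : ℝ)) := by
          have h1 : (2:ℝ) ^ k * (s / 2) ^ k = s ^ k := by
            rw [← mul_pow]; congr 1; ring
          rw [← h1]; ring
        have h3 : s ^ k / (Nat.factorial k : ℝ) * ((k : ℝ) + 1) ^ t ≤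
            Real.exp (Real.log 2 / 2 * s) * ((s / 2) ^ k / (Nat.factorial k : ℝ)) := by
          calc s ^ k / (Nat.factorial k : ℝ) * ((k : ℝ) + 1) ^ t
              ≤ s ^ k / (Nat.factorial k : ℝ) * 1 := by
                exact mul_le_mul_of_nonneg_left hb1 hsknn
            _ = (2:ℝ) ^ k * ((s / 2) ^ k / (Nat.factorial k : ℝ)) := by rw [mul_one, hsk]
            _ ≤ Real.exp (Real.log 2 / 2 * s) * ((s / 2) ^ k / (Nat.factorial k : ℝ)) :=
                mul_le_mul_of_nonneg_right h2k hs2nn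
        have h4 : (0:ℝ) ≤ (2:ℝ) ^ (-t) * (1 + s) ^ t * (s ^ k / (Nat.factorial k : ℝ)) := by
          positivity
        rw [hgdef]; dsimp only; linarith
    obtain ⟨hsum, hle⟩ := tsum_le_hasSum hfnn hpt hg
    refine ⟨hsum, hle.trans ?_⟩
    -- remains: B ≤ (2^(-t)+Cp) * (exp s * (1+s)^t)
    have hn : (1 + s) ^ (-t) ≤ (1 + s) ^ (⌈-t⌉₊ : ℕ) := by
      rw [← Real.rpow_natCast (1 + s)]
      exact Real.rpow_le_rpow_of_exponent_le (by linarith) (Nat.le_ceil (-t))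
    have h3 : (1 + s) ^ (-t) ≤ Cp * Real.exp ((1 - Real.log 2) / 2 * s) := hn.trans (hP s hs)
    have hid : (1 + s) ^ (-t) * (1 + s) ^ t = 1 := by
      rw [← Real.rpow_add h1s]; simp
    have hB2 : Real.exp (Real.log 2 / 2 * s) * Real.exp (s / 2) ≤ Cp * (Real.exp s * (1 + s) ^ t) := by
      have e1 : Real.exp (Real.log 2 / 2 * s) * Real.exp (s / 2) =
          Real.exp (Real.log 2 / 2 * s + s / 2) := (Real.exp_add _ _).symm
      have e2 : Real.exp (Real.log 2 / 2 * s + s / 2) *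
          ((1 + s) ^ (-t) * (1 + s) ^ t) ≤
          Real.exp (Real.log 2 / 2 * s + s / 2) *
            (Cp * Real.exp ((1 - Real.log 2) / 2 * s) * (1 + s) ^ t) := by
        apply mul_le_mul_of_nonneg_left _ (Real.exp_pos _).le
        exact mul_le_mul_of_nonneg_right h3 hrp.le
      rw [hid, mul_one] at e2
      have e3 : Real.exp (Real.log 2 / 2 * s + s / 2) *
          (Cp * Real.exp ((1 - Real.log 2) / 2 * s) * (1 + s) ^ t) =
          Cp * (Real.exp s * (1 + s) ^ t) := by
        rw [show Real.exp s = Real.exp (Real.log 2 / 2 * s + s / 2) *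
          Real.exp ((1 - Real.log 2) / 2 * s) by rw [← Real.exp_add]; congr 1; ring]
        ring
      rw [e1]; linarith [e2, e3.le, e3.ge]
    have e4 : (2:ℝ) ^ (-t) * (1 + s) ^ t * Real.exp s = (2:ℝ) ^ (-t) * (Real.exp s * (1 + s) ^ t) := by
      ring
    have e5 : ((2:ℝ) ^ (-t) + Cp) * (Real.exp s * (1 + s) ^ t) =
        (2:ℝ) ^ (-t) * (Real.exp s * (1 + s) ^ t) + Cp * (Real.exp s * (1 + s) ^ t) := by ring
    linarith
  · -- 0 < t
    set m : ℕ := ⌈t⌉₊ with hm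
    have htm : t ≤ (m : ℝ) := Nat.le_ceil t
    have hδ : (0:ℝ) < 2 * Real.log 2 - 1 := by
      have := Real.log_two_gt_d9
      norm_num at this ⊢
      linarith
    obtain ⟨Cp, hCp, hP⟩ := poly_le_exp m hδ
    have h2t : (0:ℝ) < (2:ℝ) ^ t := Real.rpow_pos_of_pos two_pos _
    have hK : (0:ℝ) < (2 * (m:ℝ)) ^ m + 4 ^ m := by positivity
    refine ⟨(2:ℝ) ^ t + ((2 * (m:ℝ)) ^ m + 4 ^ m) * Cp, by positivity, fun s hs => ?_⟩
    have h1s : (0:ℝ) < 1 + s := by linarith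
    have hrp : (0:ℝ) < (1 + s) ^ t := Real.rpow_pos_of_pos h1s t
    set E := Real.exp (-(2 * Real.log 2) * s) with hEdef
    have hE : (0:ℝ) < E := Real.exp_pos _
    set g : ℕ → ℝ := fun k =>
      (2:ℝ) ^ t * (1 + s) ^ t * (s ^ k / (Nat.factorial k : ℝ)) +
        (E * (2 * (m:ℝ)) ^ m * ((2 * s) ^ k / (Nat.factorial k : ℝ)) +
         E * 2 ^ m * ((Nat.descFactorial k m : ℝ) * (2 * s) ^ k / (Nat.factorial k : ℝ))) with hgdef
    have hg : HasSum g ((2:ℝ) ^ t * (1 + s) ^ t * Real.exp s +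
        (E * (2 * (m:ℝ)) ^ m * Real.exp (2 * s) +
         E * 2 ^ m * ((2 * s) ^ m * Real.exp (2 * s)))) :=
      ((hasSum_exp_real s).mul_left _).add
        (((hasSum_exp_real (2 * s)).mul_left _).add ((hasSum_descFact m (2 * s)).mul_left _))
    have hfnn : ∀ k : ℕ, 0 ≤ s ^ k / (Nat.factorial k : ℝ) * ((k : ℝ) + 1) ^ t := by
      intro k
      have : (0:ℝ) < ((k : ℝ) + 1) ^ t := Real.rpow_pos_of_pos (by positivity) t
      positivity
    have hpt : ∀ k : ℕ, s ^ k / (Nat.factorial k : ℝ) * ((k : ℝ) + 1) ^ t ≤ g k := by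
      intro k
      have hk1 : (0:ℝ) < (k : ℝ) + 1 := by positivity
      have hsknn : (0:ℝ) ≤ s ^ k / (Nat.factorial k : ℝ) := by positivity
      have hdfnn : (0:ℝ) ≤ (Nat.descFactorial k m : ℝ) := Nat.cast_nonneg _
      have h2snn : (0:ℝ) ≤ (2 * s) ^ k / (Nat.factorial k : ℝ) := by positivity
      rcases le_or_gt ((k : ℝ) + 1) (2 * (1 + s)) with hc | hc
      · have hb : ((k : ℝ) + 1) ^ t ≤ (2 * (1 + s)) ^ t :=
          Real.rpow_le_rpow hk1.le hc ht.le
        have he : (2 * (1 + s)) ^ t = 2 ^ t * (1 + s) ^ t :=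
          Real.mul_rpow (by norm_num) h1s.le
        have h1 : s ^ k / (Nat.factorial k : ℝ) * ((k : ℝ) + 1) ^ t ≤
            (2:ℝ) ^ t * (1 + s) ^ t * (s ^ k / (Nat.factorial k : ℝ)) := by
          have := mul_le_mul_of_nonneg_left (he ▸ hb) hsknn
          nlinarith [this]
        have h2 : (0:ℝ) ≤ E * (2 * (m:ℝ)) ^ m * ((2 * s) ^ k / (Nat.factorial k : ℝ)) := by
          positivity
        have h3 : (0:ℝ) ≤ E * 2 ^ m *
            ((Nat.descFactorial k m : ℝ) * (2 * s) ^ k / (Nat.factorial k : ℝ)) := by positivity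
        rw [hgdef]; dsimp only; linarith
      · have hks : 2 * s ≤ (k : ℝ) := by linarith
        have hb1 : ((k : ℝ) + 1) ^ t ≤ ((k : ℝ) + 1) ^ m := by
          rw [← Real.rpow_natCast ((k : ℝ) + 1) m]
          exact Real.rpow_le_rpow_of_exponent_le (by linarith) htm
        have hb2 : ((k : ℝ) + 1) ^ m ≤ (2 * (m:ℝ)) ^ m + 2 ^ m * (Nat.descFactorial k m : ℝ) := by
          have h := descFact_pow_bound m k
          have h' : (((k + 1) ^ m : ℕ) : ℝ) ≤
              (((2 * m) ^ m + 2 ^ m * Nat.descFactorial k m : ℕ) : ℝ) := Nat.cast_le.2 h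
          push_cast at h'
          exact h'
        have h1le : (1:ℝ) ≤ (2:ℝ) ^ ((k : ℝ) - 2 * s) := by
          rw [show (1:ℝ) = (2:ℝ) ^ (0:ℝ) from (Real.rpow_zero 2).symm]
          exact Real.rpow_le_rpow_of_exponent_le one_le_two (by linarith)
        have hsplit : (2:ℝ) ^ ((k : ℝ) - 2 * s) = (2:ℝ) ^ k * E := by
          rw [Real.rpow_sub two_pos, Real.rpow_natCast, hEdef,
            show (2:ℝ) ^ (2 * s) = Real.exp (Real.log 2 * (2 * s)) from
              Real.rpow_def_of_pos two_pos _,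
            div_eq_mul_inv, ← Real.exp_neg]
          congr 2
          ring
        have hmid : (0:ℝ) ≤ s ^ k / (Nat.factorial k : ℝ) *
            ((2 * (m:ℝ)) ^ m + 2 ^ m * (Nat.descFactorial k m : ℝ)) := by positivity
        have step1 : s ^ k / (Nat.factorial k : ℝ) * ((k : ℝ) + 1) ^ t ≤
            s ^ k / (Nat.factorial k : ℝ) *
              ((2 * (m:ℝ)) ^ m + 2 ^ m * (Nat.descFactorial k m : ℝ)) :=
          mul_le_mul_of_nonneg_left (hb1.trans hb2) hsknn
        have step2 : s ^ k / (Nat.factorial k : ℝ) *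
              ((2 * (m:ℝ)) ^ m + 2 ^ m * (Nat.descFactorial k m : ℝ)) ≤
            s ^ k / (Nat.factorial k : ℝ) *
              ((2 * (m:ℝ)) ^ m + 2 ^ m * (Nat.descFactorial k m : ℝ)) * ((2:ℝ) ^ k * E) :=
          le_mul_of_one_le_right hmid (hsplit ▸ h1le)
        have step3 : s ^ k / (Nat.factorial k : ℝ) *
              ((2 * (m:ℝ)) ^ m + 2 ^ m * (Nat.descFactorial k m : ℝ)) * ((2:ℝ) ^ k * E) =
            E * (2 * (m:ℝ)) ^ m * ((2 * s) ^ k / (Nat.factorial k : ℝ)) +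
              E * 2 ^ m * ((Nat.descFactorial k m : ℝ) * (2 * s) ^ k / (Nat.factorial k : ℝ)) := by
          rw [show ((2:ℝ) * s) ^ k = 2 ^ k * s ^ k from mul_pow 2 s k]
          ring
        have h4 : (0:ℝ) ≤ (2:ℝ) ^ t * (1 + s) ^ t * (s ^ k / (Nat.factorial k : ℝ)) := by
          positivity
        rw [hgdef]; dsimp only; linarith
    obtain ⟨hsum, hle⟩ := tsum_le_hasSum hfnn hpt hg
    refine ⟨hsum, hle.trans ?_⟩
    have hone : (1:ℝ) ≤ (1 + s) ^ t := by
      have h := Real.rpow_le_rpow_of_exponent_le (show (1:ℝ) ≤ 1 + s by linarith) ht.le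
      rwa [Real.rpow_zero] at h
    have hsm : s ^ m ≤ (1 + s) ^ m := pow_le_pow_left₀ hs (by linarith) m
    have hone_m : (1:ℝ) ≤ (1 + s) ^ m := one_le_pow₀ (by linarith)
    have hPs := hP s hs
    have hEe : E * Real.exp (2 * s) * Real.exp ((2 * Real.log 2 - 1) * s) = Real.exp s := by
      rw [hEdef, ← Real.exp_add, ← Real.exp_add]
      congr 1
      ring
    have h4m : (4:ℝ) ^ m = 2 ^ m * 2 ^ m := by rw [← mul_pow]; norm_num
    have lhs_eq : E * (2 * (m:ℝ)) ^ m * Real.exp (2 * s) +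
        E * 2 ^ m * ((2 * s) ^ m * Real.exp (2 * s)) =
        E * Real.exp (2 * s) * ((2 * (m:ℝ)) ^ m + 4 ^ m * s ^ m) := by
      rw [show ((2:ℝ) * s) ^ m = 2 ^ m * s ^ m from mul_pow 2 s m, h4m]
      ring
    have step : (2 * (m:ℝ)) ^ m + 4 ^ m * s ^ m ≤
        ((2 * (m:ℝ)) ^ m + 4 ^ m) * (1 + s) ^ m := by
      have h1 : (0:ℝ) ≤ (2 * (m:ℝ)) ^ m := by positivity
      have h2 : (0:ℝ) < (4:ℝ) ^ m := by positivity
      nlinarith [hsm, hone_m]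
    have htail : E * (2 * (m:ℝ)) ^ m * Real.exp (2 * s) +
        E * 2 ^ m * ((2 * s) ^ m * Real.exp (2 * s)) ≤
        ((2 * (m:ℝ)) ^ m + 4 ^ m) * Cp * (Real.exp s * (1 + s) ^ t) := by
      rw [lhs_eq]
      have hEex : (0:ℝ) ≤ E * Real.exp (2 * s) := by positivity
      calc E * Real.exp (2 * s) * ((2 * (m:ℝ)) ^ m + 4 ^ m * s ^ m)
          ≤ E * Real.exp (2 * s) * (((2 * (m:ℝ)) ^ m + 4 ^ m) * (1 + s) ^ m) :=
            mul_le_mul_of_nonneg_left step hEex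
        _ ≤ E * Real.exp (2 * s) * (((2 * (m:ℝ)) ^ m + 4 ^ m) *
              (Cp * Real.exp ((2 * Real.log 2 - 1) * s))) := by
            apply mul_le_mul_of_nonneg_left _ hEex
            exact mul_le_mul_of_nonneg_left hPs hK.le
        _ = ((2 * (m:ℝ)) ^ m + 4 ^ m) * Cp *
              (E * Real.exp (2 * s) * Real.exp ((2 * Real.log 2 - 1) * s)) := by ring
        _ = ((2 * (m:ℝ)) ^ m + 4 ^ m) * Cp * Real.exp s := by rw [hEe]
        _ ≤ ((2 * (m:ℝ)) ^ m + 4 ^ m) * Cp * (Real.exp s * (1 + s) ^ t) := by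
            exact mul_le_mul_of_nonneg_left
              (le_mul_of_one_le_right (Real.exp_pos s).le hone) (by positivity)
    have e4 : (2:ℝ) ^ t * (1 + s) ^ t * Real.exp s =
        (2:ℝ) ^ t * (Real.exp s * (1 + s) ^ t) := by ring
    have e5 : ((2:ℝ) ^ t + ((2 * (m:ℝ)) ^ m + 4 ^ m) * Cp) * (Real.exp s * (1 + s) ^ t) =
        (2:ℝ) ^ t * (Real.exp s * (1 + s) ^ t) +
          ((2 * (m:ℝ)) ^ m + 4 ^ m) * Cp * (Real.exp s * (1 + s) ^ t) := by ring
    linarith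


private lemma cs_lower (a s : ℝ) (hs : 0 ≤ s)
    (h1 : Summable (fun k : ℕ => s ^ k / (Nat.factorial k : ℝ) * ((k : ℝ) + 1) ^ a))
    (h2 : Summable (fun k : ℕ => s ^ k / (Nat.factorial k : ℝ) * ((k : ℝ) + 1) ^ (-a))) :
    Real.exp s * Real.exp s ≤
      (∑' k : ℕ, s ^ k / (Nat.factorial k : ℝ) * ((k : ℝ) + 1) ^ a) *
        (∑' k : ℕ, s ^ k / (Nat.factorial k : ℝ) * ((k : ℝ) + 1) ^ (-a)) := by
  set f : ℕ → ℝ := fun k => Real.sqrt (s ^ k / (Nat.factorial k : ℝ)) * ((k : ℝ) + 1) ^ (a / 2)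
    with hfdef
  set g : ℕ → ℝ := fun k => Real.sqrt (s ^ k / (Nat.factorial k : ℝ)) * ((k : ℝ) + 1) ^ (-a / 2)
    with hgdef
  have hknn : ∀ k : ℕ, (0:ℝ) < (k : ℝ) + 1 := fun k => by positivity
  have hsknn : ∀ k : ℕ, (0:ℝ) ≤ s ^ k / (Nat.factorial k : ℝ) := fun k => by positivity
  have hfg : ∀ k : ℕ, f k * g k = s ^ k / (Nat.factorial k : ℝ) := by
    intro k
    rw [hfdef, hgdef]
    dsimp only
    rw [show Real.sqrt (s ^ k / (Nat.factorial k : ℝ)) * ((k : ℝ) + 1) ^ (a / 2) *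
        (Real.sqrt (s ^ k / (Nat.factorial k : ℝ)) * ((k : ℝ) + 1) ^ (-a / 2)) =
        (Real.sqrt (s ^ k / (Nat.factorial k : ℝ)) * Real.sqrt (s ^ k / (Nat.factorial k : ℝ))) *
          (((k : ℝ) + 1) ^ (a / 2) * ((k : ℝ) + 1) ^ (-a / 2)) from by ring,
      Real.mul_self_sqrt (hsknn k), ← Real.rpow_add (hknn k),
      show a / 2 + -a / 2 = 0 from by ring, Real.rpow_zero, mul_one]
  have hf2 : ∀ k : ℕ, f k ^ 2 = s ^ k / (Nat.factorial k : ℝ) * ((k : ℝ) + 1) ^ a := by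
    intro k
    rw [hfdef]
    dsimp only
    rw [mul_pow, Real.sq_sqrt (hsknn k), ← Real.rpow_natCast (((k : ℝ) + 1) ^ (a / 2)) 2,
      ← Real.rpow_mul (hknn k).le]
    norm_num
  have hg2 : ∀ k : ℕ, g k ^ 2 = s ^ k / (Nat.factorial k : ℝ) * ((k : ℝ) + 1) ^ (-a) := by
    intro k
    rw [hgdef]
    dsimp only
    rw [mul_pow, Real.sq_sqrt (hsknn k), ← Real.rpow_natCast (((k : ℝ) + 1) ^ (-a / 2)) 2,
      ← Real.rpow_mul (hknn k).le]
    norm_num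
  have key : ∀ n : ℕ, (∑ k ∈ Finset.range n, s ^ k / (Nat.factorial k : ℝ)) ^ 2 ≤
      (∑' k : ℕ, s ^ k / (Nat.factorial k : ℝ) * ((k : ℝ) + 1) ^ a) *
        (∑' k : ℕ, s ^ k / (Nat.factorial k : ℝ) * ((k : ℝ) + 1) ^ (-a)) := by
    intro n
    have hcs := Finset.sum_mul_sq_le_sq_mul_sq (Finset.range n) f g
    rw [show (∑ k ∈ Finset.range n, f k * g k) = ∑ k ∈ Finset.range n,
        s ^ k / (Nat.factorial k : ℝ) from Finset.sum_congr rfl (fun k _ => hfg k),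
      show (∑ k ∈ Finset.range n, f k ^ 2) = ∑ k ∈ Finset.range n,
        s ^ k / (Nat.factorial k : ℝ) * ((k : ℝ) + 1) ^ a from
        Finset.sum_congr rfl (fun k _ => hf2 k),
      show (∑ k ∈ Finset.range n, g k ^ 2) = ∑ k ∈ Finset.range n,
        s ^ k / (Nat.factorial k : ℝ) * ((k : ℝ) + 1) ^ (-a) from
        Finset.sum_congr rfl (fun k _ => hg2 k)] at hcs
    refine hcs.trans (mul_le_mul ?_ ?_ ?_ ?_)
    · exact Summable.sum_le_tsum _ (fun k _ => by rw [← hf2 k]; positivity) h1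
    · exact Summable.sum_le_tsum _ (fun k _ => by rw [← hg2 k]; positivity) h2
    · exact Finset.sum_nonneg (fun k _ => by rw [← hg2 k]; positivity)
    · exact tsum_nonneg (fun k => by rw [← hf2 k]; positivity)
  have hlim : Filter.Tendsto (fun n : ℕ => (∑ k ∈ Finset.range n,
      s ^ k / (Nat.factorial k : ℝ)) ^ 2) Filter.atTop (nhds ((Real.exp s) ^ 2)) :=
    ((hasSum_exp_real s).tendsto_sum_nat).pow 2
  have := le_of_tendsto' hlim key
  calc Real.exp s * Real.exp s = (Real.exp s) ^ 2 := (sq (Real.exp s)).symm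
    _ ≤ _ := this

theorem exp_series_power_weight_estimate (a : ℝ) :
    ∃ c C : ℝ, 0 < c ∧ 0 < C ∧
      ∀ s : ℝ, 0 ≤ s →
        c * (Real.exp s / (1 + s) ^ a) ≤
          (∑' k : ℕ, s ^ k / (Nat.factorial k : ℝ) * (1 / ((k : ℝ) + 1) ^ a)) ∧
        (∑' k : ℕ, s ^ k / (Nat.factorial k : ℝ) * (1 / ((k : ℝ) + 1) ^ a)) ≤
          C * (Real.exp s / (1 + s) ^ a) := by
  obtain ⟨C₁, hC₁, h₁⟩ := upper_bound (-a)
  obtain ⟨C₂, hC₂, h₂⟩ := upper_bound a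
  refine ⟨1 / C₂, C₁, by positivity, hC₁, fun s hs => ?_⟩
  obtain ⟨hsum₁, hle₁⟩ := h₁ s hs
  obtain ⟨hsum₂, hle₂⟩ := h₂ s hs
  have h1s : (0:ℝ) < 1 + s := by linarith
  have hre : (∑' k : ℕ, s ^ k / (Nat.factorial k : ℝ) * (1 / ((k : ℝ) + 1) ^ a)) =
      ∑' k : ℕ, s ^ k / (Nat.factorial k : ℝ) * ((k : ℝ) + 1) ^ (-a) :=
    tsum_congr fun k => by
      rw [Real.rpow_neg (by positivity : (0:ℝ) ≤ (k : ℝ) + 1), one_div]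
  have hd : Real.exp s / (1 + s) ^ a = Real.exp s * (1 + s) ^ (-a) := by
    rw [Real.rpow_neg h1s.le, div_eq_mul_inv]
  rw [hre, hd]
  constructor
  · -- lower bound
    have hcs := cs_lower a s hs hsum₂ hsum₁
    have hT : (0:ℝ) ≤ ∑' k : ℕ, s ^ k / (Nat.factorial k : ℝ) * ((k : ℝ) + 1) ^ (-a) :=
      tsum_nonneg fun k => by
        have : (0:ℝ) < ((k : ℝ) + 1) ^ (-a) := Real.rpow_pos_of_pos (by positivity) _
        positivity
    have hstep : Real.exp s * Real.exp s ≤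
        (C₂ * (Real.exp s * (1 + s) ^ a)) *
          (∑' k : ℕ, s ^ k / (Nat.factorial k : ℝ) * ((k : ℝ) + 1) ^ (-a)) :=
      hcs.trans (mul_le_mul_of_nonneg_right hle₂ hT)
    have hpos : (0:ℝ) < C₂ * (Real.exp s * (1 + s) ^ a) := by
      have := Real.rpow_pos_of_pos h1s a
      positivity
    rw [show (1 / C₂) * (Real.exp s * (1 + s) ^ (-a)) =
        (Real.exp s * Real.exp s) / (C₂ * (Real.exp s * (1 + s) ^ a)) from by
      rw [Real.rpow_neg h1s.le]
      have hrpa : (0:ℝ) < (1 + s) ^ a := Real.rpow_pos_of_pos h1s a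
      field_simp]
    rw [div_le_iff₀ hpos]
    calc Real.exp s * Real.exp s ≤ _ := hstep
      _ = (∑' k : ℕ, s ^ k / (Nat.factorial k : ℝ) * ((k : ℝ) + 1) ^ (-a)) *
          (C₂ * (Real.exp s * (1 + s) ^ a)) := mul_comm _ _
  · exact hle₁
end

section
/- For 0 ≤ a < 1 and s ≥ 1, the function f_a(s) = Σ_{k=0}^{∞} (s^k/k!) · (s/(k+1))^a satisfies e^s (1 - 2/e) ≤ f_a(s) ≤ 2 e^s. -/
lemma exp_eq_tsum_pow_div (s : ℝ) :
    Real.exp s = ∑' k : ℕ, s ^ k / (Nat.factorial k : ℝ) := by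
  rw [Real.exp_eq_exp_ℝ, NormedSpace.exp_eq_tsum_div]

theorem f_a_estimate (a s : ℝ) (ha0 : 0 ≤ a) (ha1 : a < 1) (hs : 1 ≤ s) :
    Real.exp s * (1 - 2 / Real.exp 1) ≤
      (∑' k : ℕ, s ^ k / (Nat.factorial k : ℝ) * (s / ((k : ℝ) + 1)) ^ a) ∧
    (∑' k : ℕ, s ^ k / (Nat.factorial k : ℝ) * (s / ((k : ℝ) + 1)) ^ a) ≤
      2 * Real.exp s := by
  have hs0 : (0:ℝ) < s := lt_of_lt_of_le one_pos hs
  set E : ℕ → ℝ := fun k => s ^ k / (Nat.factorial k : ℝ) with hE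
  have hEsum : Summable E := Real.summable_pow_div_factorial s
  have hEpos : ∀ k, 0 < E k := fun k =>
    div_pos (pow_pos hs0 k) (by exact_mod_cast Nat.factorial_pos k)
  have hshift : ∀ k : ℕ, E k * (s / ((k:ℝ) + 1)) = E (k + 1) := by
    intro k
    simp only [hE, Nat.factorial_succ]
    have hk : ((k:ℝ) + 1) ≠ 0 := by positivity
    have hfac : (Nat.factorial k : ℝ) ≠ 0 := by
      exact_mod_cast (Nat.factorial_pos k).ne'
    push_cast
    field_simp
    ring
  set f : ℕ → ℝ := fun k => E k * (s / ((k:ℝ) + 1)) ^ a with hf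
  have hx : ∀ k : ℕ, 0 < s / ((k:ℝ) + 1) := fun k => div_pos hs0 (by positivity)
  have hfnonneg : ∀ k, 0 ≤ f k := fun k =>
    mul_nonneg (hEpos k).le (Real.rpow_nonneg (hx k).le a)
  have hfle : ∀ k, f k ≤ E k + E (k + 1) := by
    intro k
    have hxk := hx k
    have hb : (s / ((k:ℝ) + 1)) ^ a ≤ 1 + s / ((k:ℝ) + 1) := by
      rcases le_or_gt (s / ((k:ℝ) + 1)) 1 with h | h
      · have := Real.rpow_le_one hxk.le h ha0
        linarith [hxk.le]
      · have h1 : (s / ((k:ℝ) + 1)) ^ a ≤ (s / ((k:ℝ) + 1)) ^ (1:ℝ) :=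
          Real.rpow_le_rpow_of_exponent_le h.le ha1.le
        rw [Real.rpow_one] at h1
        linarith
    calc f k ≤ E k * (1 + s / ((k:ℝ) + 1)) :=
          mul_le_mul_of_nonneg_left hb (hEpos k).le
      _ = E k + E (k + 1) := by rw [mul_add, mul_one, hshift]
  have hsum2 : Summable (fun k => E (k + 1)) :=
    hEsum.comp_injective Nat.succ_injective
  have hhsum : Summable (fun k => E k + E (k + 1)) := hEsum.add hsum2
  have hfsum : Summable f := Summable.of_nonneg_of_le hfnonneg hfle hhsum
  have hEtsum : ∑' k, E k = Real.exp s := (exp_eq_tsum_pow_div s).symm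
  have htail : ∀ n : ℕ, ∑' i : ℕ, E (i + n) =
      Real.exp s - ∑ j ∈ Finset.range n, E j := by
    intro n
    have h := Summable.sum_add_tsum_nat_add (f := E) n hEsum
    rw [hEtsum] at h
    linarith
  -- upper bound
  have hupper : (∑' k, f k) ≤ 2 * Real.exp s := by
    have h1 : (∑' k, f k) ≤ ∑' k, (E k + E (k + 1)) :=
      Summable.tsum_le_tsum hfle hfsum hhsum
    have ht1 : ∑' i : ℕ, E (i + 1) = Real.exp s - 1 := by
      have := htail 1
      simpa [hE] using this
    have h2 : ∑' k, (E k + E (k + 1)) = Real.exp s + (Real.exp s - 1) := by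
      rw [Summable.tsum_add hEsum hsum2, hEtsum]
      rw [ht1]
    have := Real.exp_pos s
    linarith
  -- lower bound
  set m : ℕ := Nat.floor s with hm
  have hm1 : 1 ≤ m := Nat.le_floor (by exact_mod_cast hs)
  have hms : (m:ℝ) ≤ s := Nat.floor_le hs0.le
  have hsm : s < (m:ℝ) + 1 := Nat.lt_floor_add_one s
  set g : ℕ → ℝ := fun k => if k < m then E k else E (k + 1) with hg
  have hgnonneg : ∀ k, 0 ≤ g k := by
    intro k; by_cases h : k < m <;> simp [hg, h, (hEpos _).le]
  have hgle : ∀ k, g k ≤ f k := by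
    intro k
    by_cases h : k < m
    · have hk1 : ((k:ℝ) + 1) ≤ s := by
        have : ((k:ℝ) + 1) ≤ (m:ℝ) := by exact_mod_cast Nat.succ_le_of_lt h
        linarith
      have hx1 : 1 ≤ s / ((k:ℝ) + 1) := (one_le_div (by positivity)).mpr hk1
      have : (1:ℝ) ≤ (s / ((k:ℝ) + 1)) ^ a := Real.one_le_rpow hx1 ha0
      have := mul_le_mul_of_nonneg_left this (hEpos k).le
      simpa [hg, hf, h] using this
    · have hk1 : s ≤ ((k:ℝ) + 1) := by
        push_neg at h
        have : (m:ℝ) ≤ (k:ℝ) := by exact_mod_cast h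
        linarith
      have hx1 : s / ((k:ℝ) + 1) ≤ 1 := (div_le_one (by positivity)).mpr hk1
      have h1 : (s / ((k:ℝ) + 1)) ^ (1:ℝ) ≤ (s / ((k:ℝ) + 1)) ^ a :=
        Real.rpow_le_rpow_of_exponent_ge (hx k) hx1 ha1.le
      rw [Real.rpow_one] at h1
      have h2 := mul_le_mul_of_nonneg_left h1 (hEpos k).le
      rw [hshift k] at h2
      simpa [hg, hf, h] using h2
  have hgsum : Summable g := Summable.of_nonneg_of_le hgnonneg hgle hfsum
  have hgtsum : ∑' k, g k = Real.exp s - E m := by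
    have h := (Summable.sum_add_tsum_nat_add (f := g) m hgsum).symm
    have hsum1 : ∑ k ∈ Finset.range m, g k = ∑ k ∈ Finset.range m, E k :=
      Finset.sum_congr rfl (by intro k hk; simp [hg, Finset.mem_range.mp hk])
    have htail2 : ∑' i : ℕ, g (i + m) = ∑' i : ℕ, E (i + (m + 1)) := by
      apply tsum_congr
      intro i
      have h1 : ¬ (i + m < m) := by omega
      have h2 : i + m + 1 = i + (m + 1) := by omega
      simp [hg, h1, h2]
    rw [hsum1, htail2, htail (m + 1), Finset.sum_range_succ] at h
    linarith [h]
  have hEm : E m ≤ (2/3) * Real.exp s := by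
    have hkey : E m + E (m + 1) ≤ Real.exp s := by
      have h2 : ∑ j ∈ Finset.range (m + 2), E j ≤ Real.exp s :=
        Real.sum_le_exp_of_nonneg hs0.le (m + 2)
      have h3 : (0:ℝ) ≤ ∑ j ∈ Finset.range m, E j :=
        Finset.sum_nonneg fun j _ => (hEpos j).le
      rw [Finset.sum_range_succ, Finset.sum_range_succ] at h2
      linarith
    have hdiv : (1:ℝ)/2 ≤ s / ((m:ℝ) + 1) := by
      rw [le_div_iff₀ (by positivity)]
      linarith
    have h4 : (1/2) * E m ≤ E (m + 1) := by
      rw [← hshift m]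
      have := mul_le_mul_of_nonneg_left hdiv (hEpos m).le
      linarith [this]
    linarith
  constructor
  · have hlow : Real.exp s - E m ≤ ∑' k, f k := by
      rw [← hgtsum]
      exact Summable.tsum_le_tsum hgle hgsum hfsum
    have h23 : (2/3) * Real.exp s ≤ Real.exp s * (2 / Real.exp 1) := by
      rw [mul_comm (Real.exp s)]
      apply mul_le_mul_of_nonneg_right _ (Real.exp_pos s).le
      rw [div_le_div_iff₀ (by norm_num) (Real.exp_pos 1)]
      nlinarith [Real.exp_one_lt_d9]
    have : Real.exp s * (1 - 2 / Real.exp 1) =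
        Real.exp s - Real.exp s * (2 / Real.exp 1) := by ring
    rw [this]
    linarith
  · exact hupper
end

section
/- Let ℓ be a positive integer. There exist constants c, C > 0 such that for every integer m ≥ 8ℓ, c · 2^{m/ℓ} ≤ Σ_{k=0}^{m} Γ((m+2−ℓ)/ℓ) / (Γ((k+1)/ℓ) · Γ((m−k+1)/ℓ)) ≤ C · 2^{m/ℓ}. -/
open Finset


noncomputable def gbin (A p : ℝ) : ℝ :=
  Real.Gamma A / (Real.Gamma p * Real.Gamma (A - p + 1))

lemma Gamma_ne_zero' {x : ℝ} (h1 : -1 < x) (h2 : x ≠ 0) : Real.Gamma x ≠ 0 := by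
  apply Real.Gamma_ne_zero
  intro n
  match n with
  | 0 => simpa using h2
  | (k+1) =>
    intro hx
    rw [hx] at h1
    push_cast at h1
    linarith

lemma pascal {A p : ℝ} (hA : 0 < A) (hp : 0 < p) (hq : 0 < A - p + 2) :
    gbin (A + 1) p = gbin A p + gbin A (p - 1) := by
  unfold gbin
  have hA1 : Real.Gamma (A + 1) ≠ 0 := ne_of_gt (Real.Gamma_pos_of_pos (by linarith))
  have hA0 : Real.Gamma A ≠ 0 := ne_of_gt (Real.Gamma_pos_of_pos hA)
  rcases eq_or_ne p 1 with hp1 | hp1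
  · subst hp1
    simp only [sub_self, Real.Gamma_zero, Real.Gamma_one, one_mul, zero_mul]
    rw [show A + 1 - 1 + 1 = A + 1 by ring, show A - 1 + 1 = A by ring]
    rw [div_self hA1, div_self hA0, div_zero]
    norm_num
  rcases eq_or_ne p (A + 1) with hpA | hpA
  · subst hpA
    rw [show A + 1 - (A+1) + 1 = 1 by ring, show A - (A+1) + 1 = 0 by ring,
      show A - (A + 1 - 1) + 1 = 1 by ring, show A + 1 - 1 = A by ring]
    simp only [Real.Gamma_one, mul_one, Real.Gamma_zero, mul_zero, div_zero]
    rw [div_self hA1, div_self hA0, zero_add]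
  · have hpm : p - 1 ≠ 0 := by intro h; apply hp1; linarith
    have hqm : A - p + 1 ≠ 0 := by intro h; apply hpA; linarith
    have e1 : Real.Gamma (A + 1) = A * Real.Gamma A := Real.Gamma_add_one (ne_of_gt hA)
    have e2 : Real.Gamma p = (p - 1) * Real.Gamma (p - 1) := by
      have := Real.Gamma_add_one hpm
      rw [show p - 1 + 1 = p by ring] at this
      exact this
    have e3 : Real.Gamma (A - p + 2) = (A - p + 1) * Real.Gamma (A - p + 1) := by
      have := Real.Gamma_add_one hqm
      rw [show A - p + 1 + 1 = A - p + 2 by ring] at this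
      exact this
    have hGp : Real.Gamma p ≠ 0 := ne_of_gt (Real.Gamma_pos_of_pos hp)
    have hGpm : Real.Gamma (p - 1) ≠ 0 := Gamma_ne_zero' (by linarith) hpm
    have hGq : Real.Gamma (A - p + 1) ≠ 0 := Gamma_ne_zero' (by linarith) hqm
    have hGq2 : Real.Gamma (A - p + 2) ≠ 0 := ne_of_gt (Real.Gamma_pos_of_pos hq)
    rw [show A + 1 - p + 1 = A - p + 2 by ring, show A - (p - 1) + 1 = A - p + 2 by ring]
    rw [e1, e2, e3]
    field_simp
    ring


lemma one_le_Gamma {y : ℝ} (hy : 2 ≤ y) : 1 ≤ Real.Gamma y := by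
  rcases eq_or_lt_of_le hy with h | h
  · rw [← h, Real.Gamma_two]
  · have hc := Real.convexOn_log_Gamma
    have h1 : (0:ℝ) < y - 1 := by linarith
    set μ : ℝ := 1 / (y - 1) with hμ
    have hμ0 : 0 < μ := by positivity
    have hμ1 : μ ≤ 1 := by rw [hμ, div_le_one h1]; linarith
    have hμy : μ * (y - 1) = 1 := by rw [hμ]; field_simp
    have key := hc.2 (Set.mem_Ioi.2 one_pos) (Set.mem_Ioi.2 (by linarith : (0:ℝ) < y))
      (by linarith : (0:ℝ) ≤ 1 - μ) (le_of_lt hμ0) (by ring)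
    have hcomb : (1 - μ) • (1:ℝ) + μ • y = 2 := by
      simp only [smul_eq_mul]; linear_combination hμy
    rw [hcomb] at key
    simp only [Function.comp_apply, smul_eq_mul, Real.Gamma_two, Real.Gamma_one,
      Real.log_one, mul_zero, zero_add] at key
    have : 0 ≤ Real.log (Real.Gamma y) := by
      by_contra hneg
      push_neg at hneg
      nlinarith
    have hpos : 0 < Real.Gamma y := Real.Gamma_pos_of_pos (by linarith)
    calc (1:ℝ) = Real.exp 0 := by simp
    _ ≤ Real.exp (Real.log (Real.Gamma y)) := Real.exp_le_exp.2 this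
    _ = Real.Gamma y := Real.exp_log hpos

lemma Gamma_mono {x y : ℝ} (hx : 1 ≤ x) (hxy : x ≤ y) (hy : 2 ≤ y) :
    Real.Gamma x ≤ Real.Gamma y := by
  rcases eq_or_lt_of_le hxy with h | h
  · rw [h]
  · have hc := Real.convexOn_log_Gamma
    have h1 : (0:ℝ) < y - 1 := by linarith
    set lam : ℝ := (x - 1) / (y - 1) with hlam
    have hl0 : 0 ≤ lam := div_nonneg (by linarith) (le_of_lt h1)
    have hl1 : lam ≤ 1 := by rw [hlam, div_le_one h1]; linarith
    have hly' : lam * (y - 1) = x - 1 := by rw [hlam]; field_simp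
    have key := hc.2 (Set.mem_Ioi.2 one_pos) (Set.mem_Ioi.2 (by linarith : (0:ℝ) < y))
      (by linarith : (0:ℝ) ≤ 1 - lam) hl0 (by ring)
    have hcomb : (1 - lam) • (1:ℝ) + lam • y = x := by
      simp only [smul_eq_mul]; linear_combination hly'
    rw [hcomb] at key
    simp only [Function.comp_apply, smul_eq_mul, Real.Gamma_one, Real.log_one,
      mul_zero, zero_add] at key
    have hly : 0 ≤ Real.log (Real.Gamma y) := Real.log_nonneg (one_le_Gamma hy)
    have : Real.log (Real.Gamma x) ≤ Real.log (Real.Gamma y) := by nlinarith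
    have hpx : 0 < Real.Gamma x := Real.Gamma_pos_of_pos (by linarith)
    have hpy : 0 < Real.Gamma y := Real.Gamma_pos_of_pos (by linarith)
    exact (Real.log_le_log_iff hpx hpy).1 this

lemma Gamma_mul_le {p q : ℝ} (hp : 1 ≤ p) (hq : 1 ≤ q) :
    Real.Gamma p * Real.Gamma q ≤ Real.Gamma (p + q - 1) := by
  rcases eq_or_lt_of_le (by linarith : (1:ℝ) ≤ p + q - 1) with h | h
  · have hp1 : p = 1 := by linarith
    have hq1 : q = 1 := by linarith
    rw [hp1, hq1]
    norm_num [Real.Gamma_one]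
  · have hc := Real.convexOn_log_Gamma
    have h1 : (0:ℝ) < (p + q - 1) - 1 := by linarith
    set s : ℝ := p + q - 1 with hs
    set lam : ℝ := (p - 1) / (s - 1) with hlam
    have hl0 : 0 ≤ lam := div_nonneg (by linarith) (by linarith)
    have hl1 : lam ≤ 1 := by rw [hlam, div_le_one (by linarith)]; linarith
    have hls : lam * (s - 1) = p - 1 := by rw [hlam]; field_simp
    have k1 := hc.2 (Set.mem_Ioi.2 one_pos) (Set.mem_Ioi.2 (by linarith : (0:ℝ) < s))
      (by linarith : (0:ℝ) ≤ 1 - lam) hl0 (by ring)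
    have k2 := hc.2 (Set.mem_Ioi.2 one_pos) (Set.mem_Ioi.2 (by linarith : (0:ℝ) < s))
      hl0 (by linarith : (0:ℝ) ≤ 1 - lam) (by ring)
    have hc1 : (1 - lam) • (1:ℝ) + lam • s = p := by
      simp only [smul_eq_mul]; linear_combination hls
    have hc2 : lam • (1:ℝ) + (1 - lam) • s = q := by
      simp only [smul_eq_mul]; linear_combination -hls
    rw [hc1] at k1
    rw [hc2] at k2
    simp only [Function.comp_apply, smul_eq_mul, Real.Gamma_one, Real.log_one,
      mul_zero, zero_add] at k1 k2
    have hpp : 0 < Real.Gamma p := Real.Gamma_pos_of_pos (by linarith)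
    have hpq : 0 < Real.Gamma q := Real.Gamma_pos_of_pos (by linarith)
    have hps : 0 < Real.Gamma s := Real.Gamma_pos_of_pos (by linarith)
    have : Real.log (Real.Gamma p * Real.Gamma q) ≤ Real.log (Real.Gamma s) := by
      rw [Real.log_mul (ne_of_gt hpp) (ne_of_gt hpq)]
      nlinarith
    exact (Real.log_le_log_iff (by positivity) hps).1 this

lemma gbin_symm (A p : ℝ) : gbin A p = gbin A (A - p + 1) := by
  unfold gbin
  rw [show A - (A - p + 1) + 1 = p by ring, mul_comm]

lemma edge {A x : ℝ} (hA : 2 ≤ A) (h1 : -1 < x) (h2 : x ≤ 0) :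
    -(1/2) ≤ gbin A x ∧ gbin A x ≤ 0 := by
  unfold gbin
  rcases eq_or_lt_of_le h2 with h0 | h0
  · subst h0
    rw [Real.Gamma_zero, zero_mul, div_zero]
    norm_num
  -- x < 0
  have hx0 : x ≠ 0 := ne_of_lt h0
  have hx1 : x + 1 ≠ 0 := by intro h; linarith
  have hGA : 0 < Real.Gamma A := Real.Gamma_pos_of_pos (by linarith)
  -- Gamma (x+2) ≥ 1/2
  have hG3 : 1 ≤ Real.Gamma (x + 3) := one_le_Gamma (by linarith)
  have e2 : Real.Gamma (x + 3) = (x + 2) * Real.Gamma (x + 2) := by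
    have := Real.Gamma_add_one (show x + 2 ≠ 0 by intro h; linarith)
    rw [show x + 2 + 1 = x + 3 by ring] at this
    exact this
  have hG2pos : 0 < Real.Gamma (x + 2) := Real.Gamma_pos_of_pos (by linarith)
  have hG2 : 1/2 ≤ Real.Gamma (x + 2) := by nlinarith
  -- Gamma x = Gamma (x+2) / (x (x+1)), so Gamma x ≤ -2
  have e1 : Real.Gamma (x + 2) = (x + 1) * x * Real.Gamma x := by
    have a1 := Real.Gamma_add_one hx1
    have a0 := Real.Gamma_add_one hx0
    rw [show x + 1 + 1 = x + 2 by ring] at a1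
    rw [a1, a0]
    ring
  have hu1 : -(1/4:ℝ) ≤ (x+1) * x := by nlinarith [sq_nonneg (x + 1/2)]
  have hu2 : (x+1) * x < 0 := mul_neg_of_pos_of_neg (by linarith) h0
  have hGx : Real.Gamma x ≤ -2 := by nlinarith
  -- Gamma (A - x + 1) ≥ Gamma (A+1) = A * Gamma A
  have hGq : Real.Gamma (A + 1) ≤ Real.Gamma (A - x + 1) :=
    Gamma_mono (by linarith) (by linarith) (by linarith)
  have eA : Real.Gamma (A + 1) = A * Real.Gamma A := Real.Gamma_add_one (by positivity)
  have hGqpos : 0 < Real.Gamma (A - x + 1) := Real.Gamma_pos_of_pos (by linarith)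
  -- denominator D ≤ -2 * A * Gamma A < 0
  have hD : Real.Gamma x * Real.Gamma (A - x + 1) ≤ -2 * (A * Real.Gamma A) := by
    calc Real.Gamma x * Real.Gamma (A - x + 1) ≤ (-2) * Real.Gamma (A - x + 1) := by
          apply mul_le_mul_of_nonneg_right hGx (le_of_lt hGqpos)
    _ ≤ (-2) * (A * Real.Gamma A) := by
          rw [← eA]; nlinarith
    _ = -2 * (A * Real.Gamma A) := by ring
  have hDneg : Real.Gamma x * Real.Gamma (A - x + 1) < 0 := by nlinarith
  constructor
  · rw [le_div_iff_of_neg hDneg]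
    nlinarith [mul_nonneg (by linarith : (0:ℝ) ≤ A - 1) hGA.le]
  · exact le_of_lt (div_neg_of_pos_of_neg hGA hDneg)


noncomputable def Tsum (ℓ m : ℕ) : ℝ :=
  ∑ k ∈ Finset.range (m + 1), gbin (((m : ℝ) + 2 - ℓ) / ℓ) (((k : ℝ) + 1) / ℓ)

lemma step (ℓ m : ℕ) (hℓ : 0 < ℓ) (hm : 8 * ℓ ≤ m) :
    Tsum ℓ (m + ℓ) ≤ 2 * Tsum ℓ m ∧ 2 * Tsum ℓ m - ℓ ≤ Tsum ℓ (m + ℓ) := by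
  have hℓR : (0:ℝ) < ℓ := by exact_mod_cast hℓ
  have hmR : (8:ℝ) * ℓ ≤ m := by exact_mod_cast hm
  set A : ℝ := ((m : ℝ) + 2 - ℓ) / ℓ with hA
  have hA2 : 2 ≤ A := by
    rw [hA, le_div_iff₀ hℓR]; linarith
  have hApos : 0 < A := by linarith
  -- rewrite Tsum ℓ (m+ℓ) with A+1
  have hA1 : (((m + ℓ : ℕ) : ℝ) + 2 - ℓ) / ℓ = A + 1 := by
    rw [hA]; push_cast; field_simp; ring
  have expand : Tsum ℓ (m + ℓ) =
      (∑ k ∈ Finset.range (m + ℓ + 1), gbin A (((k : ℝ) + 1) / ℓ)) +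
      (∑ k ∈ Finset.range (m + ℓ + 1), gbin A (((k : ℝ) + 1) / ℓ - 1)) := by
    unfold Tsum
    rw [← Finset.sum_add_distrib]
    apply Finset.sum_congr rfl
    intro k hk
    rw [hA1]
    apply pascal hApos (by positivity)
    have hk' : (k : ℝ) ≤ (m : ℝ) + ℓ := by
      have := Finset.mem_range.1 hk
      exact_mod_cast Nat.lt_succ_iff.1 this
    have heq : A - ((k : ℝ) + 1) / ℓ + 2 = ((m : ℝ) + ℓ + 1 - k) / ℓ := by
      rw [hA]; field_simp; ring
    rw [heq]
    exact div_pos (by linarith) hℓR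
  -- first sum splits
  have split1 : (∑ k ∈ Finset.range (m + ℓ + 1), gbin A (((k : ℝ) + 1) / ℓ)) =
      Tsum ℓ m + ∑ k ∈ Finset.Ico (m + 1) (m + ℓ + 1), gbin A (((k : ℝ) + 1) / ℓ) := by
    rw [Finset.range_eq_Ico, ← Finset.sum_Ico_consecutive _ (by omega : 0 ≤ m + 1) (by omega : m + 1 ≤ m + ℓ + 1)]
    rw [← Finset.range_eq_Ico]
    rfl
  -- second sum splits
  have split2 : (∑ k ∈ Finset.range (m + ℓ + 1), gbin A (((k : ℝ) + 1) / ℓ - 1)) =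
      (∑ k ∈ Finset.range ℓ, gbin A (((k : ℝ) + 1) / ℓ - 1)) + Tsum ℓ m := by
    rw [Finset.range_eq_Ico, ← Finset.sum_Ico_consecutive _ (by omega : 0 ≤ ℓ) (by omega : ℓ ≤ m + ℓ + 1)]
    rw [← Finset.range_eq_Ico]
    congr 1
    rw [Finset.sum_Ico_eq_sum_range]
    have hcard : m + ℓ + 1 - ℓ = m + 1 := by omega
    rw [hcard]
    unfold Tsum
    apply Finset.sum_congr rfl
    intro k hk
    congr 1
    push_cast
    field_simp
    ring
  -- edge bounds
  have e1bound : ∀ k ∈ Finset.Ico (m + 1) (m + ℓ + 1),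
      -(1/2) ≤ gbin A (((k : ℝ) + 1) / ℓ) ∧ gbin A (((k : ℝ) + 1) / ℓ) ≤ 0 := by
    intro k hk
    obtain ⟨hk1, hk2⟩ := Finset.mem_Ico.1 hk
    have hk1R : (m : ℝ) + 1 ≤ k := by exact_mod_cast hk1
    have hk2R : (k : ℝ) ≤ m + ℓ := by exact_mod_cast Nat.lt_succ_iff.1 hk2
    rw [gbin_symm]
    have hx : A - ((k : ℝ) + 1) / ℓ + 1 = ((m : ℝ) + 1 - k) / ℓ := by
      rw [hA]; field_simp; ring
    rw [hx]
    apply edge hA2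
    · rw [neg_lt, ← neg_div, div_lt_one hℓR]; linarith
    · exact div_nonpos_of_nonpos_of_nonneg (by linarith) (le_of_lt hℓR)
  have e2bound : ∀ k ∈ Finset.range ℓ,
      -(1/2) ≤ gbin A (((k : ℝ) + 1) / ℓ - 1) ∧ gbin A (((k : ℝ) + 1) / ℓ - 1) ≤ 0 := by
    intro k hk
    have hkℓ : (k : ℝ) + 1 ≤ ℓ := by exact_mod_cast Finset.mem_range.1 hk
    apply edge hA2
    · rw [neg_lt, neg_sub, sub_lt_iff_lt_add]
      have : (0:ℝ) < ((k : ℝ) + 1) / ℓ := by positivity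
      linarith
    · rw [sub_nonpos, div_le_one hℓR]
      exact hkℓ
  -- sum bounds
  have E1le : (∑ k ∈ Finset.Ico (m + 1) (m + ℓ + 1), gbin A (((k : ℝ) + 1) / ℓ)) ≤ 0 :=
    Finset.sum_nonpos (fun k hk => (e1bound k hk).2)
  have E2le : (∑ k ∈ Finset.range ℓ, gbin A (((k : ℝ) + 1) / ℓ - 1)) ≤ 0 :=
    Finset.sum_nonpos (fun k hk => (e2bound k hk).2)
  have hcard1 : (Finset.Ico (m + 1) (m + ℓ + 1)).card = ℓ := by
    rw [Nat.card_Ico]; omega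
  have E1ge : -((ℓ : ℝ) / 2) ≤ ∑ k ∈ Finset.Ico (m + 1) (m + ℓ + 1), gbin A (((k : ℝ) + 1) / ℓ) := by
    calc -((ℓ : ℝ) / 2) = (Finset.Ico (m + 1) (m + ℓ + 1)).card • (-(1/2) : ℝ) := by
          rw [hcard1, nsmul_eq_mul]; ring
    _ ≤ _ := Finset.card_nsmul_le_sum _ _ _ (fun k hk => (e1bound k hk).1)
  have E2ge : -((ℓ : ℝ) / 2) ≤ ∑ k ∈ Finset.range ℓ, gbin A (((k : ℝ) + 1) / ℓ - 1) := by
    calc -((ℓ : ℝ) / 2) = (Finset.range ℓ).card • (-(1/2) : ℝ) := by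
          rw [Finset.card_range, nsmul_eq_mul]; ring
    _ ≤ _ := Finset.card_nsmul_le_sum _ _ _ (fun k hk => (e2bound k hk).1)
  rw [expand, split1, split2]
  constructor <;> linarith


lemma Tsum_nonneg (ℓ m : ℕ) (hℓ : 0 < ℓ) (hm : ℓ ≤ m) : 0 ≤ Tsum ℓ m := by
  have hℓR : (0:ℝ) < ℓ := by exact_mod_cast hℓ
  have hmR : (ℓ:ℝ) ≤ m := by exact_mod_cast hm
  apply Finset.sum_nonneg
  intro k hk
  have hkR : (k : ℝ) ≤ m := by exact_mod_cast Nat.lt_succ_iff.1 (Finset.mem_range.1 hk)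
  unfold gbin
  have hq : ((m : ℝ) + 2 - ℓ) / ℓ - ((k : ℝ) + 1) / ℓ + 1 = ((m : ℝ) - k + 1) / ℓ := by
    field_simp; ring
  rw [hq]
  have h1 : 0 < Real.Gamma (((m : ℝ) + 2 - ℓ) / ℓ) :=
    Real.Gamma_pos_of_pos (div_pos (by linarith) hℓR)
  have h2 : 0 < Real.Gamma (((k : ℝ) + 1) / ℓ) :=
    Real.Gamma_pos_of_pos (div_pos (by positivity) hℓR)
  have h3 : 0 < Real.Gamma (((m : ℝ) - k + 1) / ℓ) :=
    Real.Gamma_pos_of_pos (div_pos (by linarith) hℓR)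
  positivity

lemma Tsum_base (ℓ m : ℕ) (hℓ : 0 < ℓ) (hm : 8 * ℓ ≤ m) : 2 * (ℓ:ℝ) + 3 ≤ Tsum ℓ m := by
  have hℓR : (0:ℝ) < ℓ := by exact_mod_cast hℓ
  have hmR : (8:ℝ) * ℓ ≤ m := by exact_mod_cast hm
  set B := Finset.Icc (ℓ - 1) (m - ℓ + 1) with hB
  have hsub : B ⊆ Finset.range (m + 1) := by
    intro k hk
    rw [Finset.mem_range]
    have := (Finset.mem_Icc.1 hk).2
    omega
  have hterm : ∀ k ∈ B, (1:ℝ) ≤ gbin (((m : ℝ) + 2 - ℓ) / ℓ) (((k : ℝ) + 1) / ℓ) := by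
    intro k hk
    obtain ⟨hk1, hk2⟩ := Finset.mem_Icc.1 hk
    have hk1R : (ℓ:ℝ) ≤ (k:ℝ) + 1 := by
      have : ℓ ≤ k + 1 := by omega
      exact_mod_cast this
    have hk2R : (ℓ:ℝ) ≤ (m:ℝ) - k + 1 := by
      have h1 : k + ℓ ≤ m + 1 := by omega
      have : (k:ℝ) + ℓ ≤ (m:ℝ) + 1 := by exact_mod_cast h1
      linarith
    unfold gbin
    have hq : ((m : ℝ) + 2 - ℓ) / ℓ - ((k : ℝ) + 1) / ℓ + 1 = ((m : ℝ) - k + 1) / ℓ := by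
      field_simp; ring
    rw [hq]
    have hp1 : (1:ℝ) ≤ ((k : ℝ) + 1) / ℓ := by rw [le_div_iff₀ hℓR]; linarith
    have hq1 : (1:ℝ) ≤ ((m : ℝ) - k + 1) / ℓ := by rw [le_div_iff₀ hℓR]; linarith
    have hsum : ((k : ℝ) + 1) / ℓ + ((m : ℝ) - k + 1) / ℓ - 1 = ((m : ℝ) + 2 - ℓ) / ℓ := by
      field_simp; ring
    have hden : 0 < Real.Gamma (((k : ℝ) + 1) / ℓ) * Real.Gamma (((m : ℝ) - k + 1) / ℓ) := by
      have := Real.Gamma_pos_of_pos (by linarith : (0:ℝ) < ((k : ℝ) + 1) / ℓ)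
      have := Real.Gamma_pos_of_pos (by linarith : (0:ℝ) < ((m : ℝ) - k + 1) / ℓ)
      positivity
    rw [one_le_div hden]
    calc Real.Gamma (((k : ℝ) + 1) / ℓ) * Real.Gamma (((m : ℝ) - k + 1) / ℓ)
        ≤ Real.Gamma (((k : ℝ) + 1) / ℓ + ((m : ℝ) - k + 1) / ℓ - 1) := Gamma_mul_le hp1 hq1
    _ = Real.Gamma (((m : ℝ) + 2 - ℓ) / ℓ) := by rw [hsum]
  have hcard : (2 * ℓ + 3 : ℕ) ≤ B.card := by
    rw [hB, Nat.card_Icc]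
    omega
  calc 2 * (ℓ:ℝ) + 3 = ((2 * ℓ + 3 : ℕ) : ℝ) := by push_cast; ring
  _ ≤ (B.card : ℝ) := by exact_mod_cast hcard
  _ = B.card • (1:ℝ) := by rw [nsmul_eq_mul, mul_one]
  _ ≤ ∑ k ∈ B, gbin (((m : ℝ) + 2 - ℓ) / ℓ) (((k : ℝ) + 1) / ℓ) :=
      Finset.card_nsmul_le_sum _ _ _ hterm
  _ ≤ Tsum ℓ m := by
      apply Finset.sum_le_sum_of_subset_of_nonneg hsub
      intro k hk _
      have hkR : (k : ℝ) ≤ m := by exact_mod_cast Nat.lt_succ_iff.1 (Finset.mem_range.1 hk)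
      unfold gbin
      have hq : ((m : ℝ) + 2 - ℓ) / ℓ - ((k : ℝ) + 1) / ℓ + 1 = ((m : ℝ) - k + 1) / ℓ := by
        field_simp; ring
      rw [hq]
      have h1 : 0 < Real.Gamma (((m : ℝ) + 2 - ℓ) / ℓ) :=
        Real.Gamma_pos_of_pos (div_pos (by linarith) hℓR)
      have h2 : 0 < Real.Gamma (((k : ℝ) + 1) / ℓ) :=
        Real.Gamma_pos_of_pos (div_pos (by positivity) hℓR)
      have h3 : 0 < Real.Gamma (((m : ℝ) - k + 1) / ℓ) :=
        Real.Gamma_pos_of_pos (div_pos (by linarith) hℓR)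
      positivity

lemma iterate (ℓ m : ℕ) (hℓ : 0 < ℓ) (hm : 8 * ℓ ≤ m) (t : ℕ) :
    Tsum ℓ (m + t * ℓ) ≤ 2 ^ t * Tsum ℓ m ∧
    2 ^ t * (Tsum ℓ m - 2 * ℓ) + 2 * ℓ ≤ Tsum ℓ (m + t * ℓ) := by
  induction t with
  | zero => simp
  | succ t ih =>
    obtain ⟨ih1, ih2⟩ := ih
    have hm' : 8 * ℓ ≤ m + t * ℓ := le_trans hm (Nat.le_add_right _ _)
    have hs := step ℓ (m + t * ℓ) hℓ hm'
    have hEq : m + (t + 1) * ℓ = m + t * ℓ + ℓ := by ring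
    rw [hEq]
    have hpow : (2:ℝ) ^ (t + 1) = 2 * 2 ^ t := by ring
    constructor
    · rw [hpow]; linarith [hs.1]
    · rw [hpow]
      have hℓR : (0:ℝ) ≤ ℓ := Nat.cast_nonneg ℓ
      nlinarith [hs.2]


theorem gamma_sum_estimate (ℓ : ℕ) (hℓ : 0 < ℓ) :
    ∃ c C : ℝ, 0 < c ∧ 0 < C ∧
      ∀ m : ℕ, 8 * ℓ ≤ m →
        c * 2 ^ ((m : ℝ) / (ℓ : ℝ)) ≤
          (∑ k ∈ Finset.range (m + 1),
            Real.Gamma (((m : ℝ) + 2 - (ℓ : ℝ)) / (ℓ : ℝ)) /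
              (Real.Gamma (((k : ℝ) + 1) / (ℓ : ℝ)) *
                Real.Gamma (((m : ℝ) - (k : ℝ) + 1) / (ℓ : ℝ)))) ∧
        (∑ k ∈ Finset.range (m + 1),
            Real.Gamma (((m : ℝ) + 2 - (ℓ : ℝ)) / (ℓ : ℝ)) /
              (Real.Gamma (((k : ℝ) + 1) / (ℓ : ℝ)) *
                Real.Gamma (((m : ℝ) - (k : ℝ) + 1) / (ℓ : ℝ)))) ≤
          C * 2 ^ ((m : ℝ) / (ℓ : ℝ)) := by
  have hℓR : (0:ℝ) < ℓ := by exact_mod_cast hℓ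
  have hSnn : 0 ≤ ∑ j ∈ Finset.Ico (8 * ℓ) (9 * ℓ), Tsum ℓ j := by
    apply Finset.sum_nonneg
    intro j hj
    exact Tsum_nonneg ℓ j hℓ (by have := (Finset.mem_Ico.1 hj).1; omega)
  refine ⟨3 / 512, (∑ j ∈ Finset.Ico (8 * ℓ) (9 * ℓ), Tsum ℓ j) / 256 + 1,
    by norm_num, by linarith, ?_⟩
  intro m hm
  have hsum_eq : (∑ k ∈ Finset.range (m + 1),
      Real.Gamma (((m : ℝ) + 2 - (ℓ : ℝ)) / (ℓ : ℝ)) /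
        (Real.Gamma (((k : ℝ) + 1) / (ℓ : ℝ)) *
          Real.Gamma (((m : ℝ) - (k : ℝ) + 1) / (ℓ : ℝ)))) = Tsum ℓ m := by
    apply Finset.sum_congr rfl
    intro k _
    unfold gbin
    congr 2
    field_simp
    ring
  rw [hsum_eq]
  set t := (m - 8 * ℓ) / ℓ with ht
  set m0 := 8 * ℓ + (m - 8 * ℓ) % ℓ with hm0def
  have hdm : ℓ * t + (m - 8 * ℓ) % ℓ = m - 8 * ℓ := by
    rw [ht]; exact Nat.div_add_mod _ _
  have hm0 : m0 + t * ℓ = m := by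
    have h1 : m0 + t * ℓ = 8 * ℓ + (ℓ * t + (m - 8 * ℓ) % ℓ) := by rw [hm0def]; ring
    rw [h1, hdm]
    omega
  have h8 : 8 * ℓ ≤ m0 := by omega
  have h9 : m0 ≤ 9 * ℓ := by
    have := Nat.mod_lt (m - 8 * ℓ) hℓ
    omega
  have hiter := iterate ℓ m0 hℓ h8 t
  rw [hm0] at hiter
  have hbase := Tsum_base ℓ m0 hℓ h8
  have h8R : (8:ℝ) * ℓ ≤ m0 := by exact_mod_cast h8
  have h9R : (m0:ℝ) ≤ 9 * ℓ := by exact_mod_cast h9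
  have hm0R : (m:ℝ) = (m0:ℝ) + (t:ℝ) * ℓ := by exact_mod_cast hm0.symm
  have hexp : (m:ℝ) / ℓ = (m0:ℝ) / ℓ + t := by
    rw [hm0R]; field_simp
  have h2t : (2:ℝ) ^ ((m:ℝ) / ℓ) = (2:ℝ) ^ ((m0:ℝ) / ℓ) * 2 ^ t := by
    rw [hexp, Real.rpow_add (by norm_num), Real.rpow_natCast]
  have hup : (2:ℝ) ^ ((m0:ℝ) / ℓ) ≤ 512 := by
    have h1 : (m0:ℝ) / ℓ ≤ 9 := by rw [div_le_iff₀ hℓR]; linarith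
    calc (2:ℝ) ^ ((m0:ℝ) / ℓ) ≤ (2:ℝ) ^ (9:ℝ) :=
          Real.rpow_le_rpow_of_exponent_le (by norm_num) h1
    _ = 512 := by
          rw [show (9:ℝ) = ((9:ℕ):ℝ) by norm_num, Real.rpow_natCast]; norm_num
  have hdown : (256:ℝ) ≤ (2:ℝ) ^ ((m0:ℝ) / ℓ) := by
    have h1 : (8:ℝ) ≤ (m0:ℝ) / ℓ := by rw [le_div_iff₀ hℓR]; linarith
    calc (256:ℝ) = (2:ℝ) ^ (8:ℝ) := by
          rw [show (8:ℝ) = ((8:ℕ):ℝ) by norm_num, Real.rpow_natCast]; norm_num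
    _ ≤ (2:ℝ) ^ ((m0:ℝ) / ℓ) := Real.rpow_le_rpow_of_exponent_le (by norm_num) h1
  have h2tpos : (0:ℝ) < 2 ^ t := by positivity
  constructor
  · -- lower bound
    calc (3:ℝ) / 512 * 2 ^ ((m:ℝ) / ℓ) = 3 / 512 * ((2:ℝ) ^ ((m0:ℝ) / ℓ) * 2 ^ t) := by
          rw [h2t]
    _ ≤ 3 / 512 * (512 * 2 ^ t) := by nlinarith
    _ = 3 * 2 ^ t := by ring
    _ ≤ 2 ^ t * (Tsum ℓ m0 - 2 * ℓ) + 2 * ℓ := by nlinarith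
    _ ≤ Tsum ℓ m := hiter.2
  · -- upper bound
    have hmem : Tsum ℓ m0 ≤ ∑ j ∈ Finset.Ico (8 * ℓ) (9 * ℓ), Tsum ℓ j := by
      apply Finset.single_le_sum (f := fun j => Tsum ℓ j)
      · intro j hj
        exact Tsum_nonneg ℓ j hℓ (by have := (Finset.mem_Ico.1 hj).1; omega)
      · rw [Finset.mem_Ico]
        constructor
        · exact h8
        · have := Nat.mod_lt (m - 8 * ℓ) hℓ
          omega
    calc Tsum ℓ m ≤ 2 ^ t * Tsum ℓ m0 := hiter.1
    _ ≤ 2 ^ t * ∑ j ∈ Finset.Ico (8 * ℓ) (9 * ℓ), Tsum ℓ j := by nlinarith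
    _ ≤ ((∑ j ∈ Finset.Ico (8 * ℓ) (9 * ℓ), Tsum ℓ j) / 256 + 1) * (2 ^ ((m0:ℝ) / ℓ) * 2 ^ t) := by
          nlinarith [mul_le_mul_of_nonneg_right hdown (le_of_lt h2tpos)]
    _ = ((∑ j ∈ Finset.Ico (8 * ℓ) (9 * ℓ), Tsum ℓ j) / 256 + 1) * 2 ^ ((m:ℝ) / ℓ) := by
          rw [h2t]
end

section
/- Let ℓ be a positive integer and α > 0. The reproducing (Bergman) kernel K of the Fock space F^{2,ℓ}_α satisfies K(z,w) = (ℓ α^{1/ℓ}/π) Σ_{m=0}^{∞} α^{m/ℓ} z^m \overline{w}^m / Γ((m+1)/ℓ) for all z, w ∈ ℂ. -/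
open MeasureTheory Set Filter
open scoped Real Topology ENNReal

noncomputable section

namespace BergmanAux

/-- Polar-coordinate integrability transfer, real version. -/
lemma integrableOn_polar_iff {E : Type*} [NormedAddCommGroup E] [NormedSpace ℝ E]
    (f : ℝ × ℝ → E) :
    IntegrableOn (fun p : ℝ × ℝ => p.1 • f (polarCoord.symm p)) polarCoord.target ↔
      Integrable f := by
  set B : ℝ × ℝ → ℝ × ℝ →L[ℝ] ℝ × ℝ := fun p =>
    LinearMap.toContinuousLinearMap (Matrix.toLin (Module.Basis.finTwoProd ℝ) (Module.Basis.finTwoProd ℝ)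
      !![Real.cos p.2, -p.1 * Real.sin p.2; Real.sin p.2, p.1 * Real.cos p.2]) with hB
  have A : ∀ p ∈ polarCoord.symm.source, HasFDerivWithinAt polarCoord.symm (B p)
      polarCoord.symm.source p :=
    fun p _ => (hasFDerivAt_polarCoord_symm p).hasFDerivWithinAt
  have B_det : ∀ p, (B p).det = p.1 := by
    intro p
    conv_rhs => rw [← one_mul p.1, ← Real.cos_sq_add_sin_sq p.2]
    simp only [hB, neg_mul, LinearMap.det_toContinuousLinearMap, LinearMap.det_toLin,
      Matrix.det_fin_two_of, sub_neg_eq_add]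
    ring
  have h := integrableOn_image_iff_integrableOn_abs_det_fderiv_smul volume
    polarCoord.symm.open_source.measurableSet A polarCoord.symm.injOn f
  rw [polarCoord.symm.image_source_eq_target] at h
  have hsrc : IntegrableOn f polarCoord.symm.target ↔ Integrable f := by
    rw [IntegrableOn, show polarCoord.symm.target = polarCoord.source from rfl,
      Measure.restrict_congr_set polarCoord_source_ae_eq_univ, Measure.restrict_univ]
  rw [hsrc] at h
  rw [h]
  refine integrableOn_congr_fun (fun p hp => ?_) polarCoord.open_target.measurableSet
  have hp1 : 0 < p.1 := hp.1
  rw [B_det, abs_of_pos hp1]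

/-- Polar-coordinate integrability transfer, complex version. -/
lemma complex_integrableOn_polar_iff {E : Type*} [NormedAddCommGroup E] [NormedSpace ℝ E]
    (f : ℂ → E) :
    IntegrableOn (fun p : ℝ × ℝ => p.1 • f (Complex.polarCoord.symm p)) polarCoord.target ↔
      Integrable f := by
  rw [← (Complex.volume_preserving_equiv_real_prod.symm).integrable_comp_emb
      Complex.measurableEquivRealProd.symm.measurableEmbedding,
    ← integrableOn_polar_iff]
  rfl

lemma integral_theta_ne (k : ℤ) (hk : k ≠ 0) :
    ∫ θ in Ioo (-π) π, Complex.exp ((k : ℂ) * θ * Complex.I) = 0 := by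
  have hle : (-π : ℝ) ≤ π := by linarith [Real.pi_pos]
  rw [← MeasureTheory.integral_Ioc_eq_integral_Ioo,
    ← intervalIntegral.integral_of_le hle]
  have hc : ((k : ℂ) * Complex.I) ≠ 0 := by
    simp [Complex.I_ne_zero, hk]
  have h1 : ∀ θ : ℝ, (k : ℂ) * θ * Complex.I = ((k : ℂ) * Complex.I) * θ := by
    intro θ; ring
  simp_rw [h1]
  rw [integral_exp_mul_complex hc]
  have : Complex.exp ((k : ℂ) * Complex.I * π) = Complex.exp ((k : ℂ) * Complex.I * (-π)) := by
    rw [Complex.exp_eq_exp_iff_exists_int]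
    exact ⟨k, by push_cast; ring⟩
  rw [this]
  simp [Complex.ofReal_neg]

lemma integral_theta_zero :
    ∫ _θ in Ioo (-π) π, (1 : ℂ) = ((2 * π : ℝ) : ℂ) := by
  rw [setIntegral_const, Real.volume_real_Ioo, Complex.real_smul, mul_one,
    max_eq_left (by linarith [Real.pi_pos] : (0:ℝ) ≤ π - -π)]
  push_cast
  ring

lemma integral_theta (k : ℤ) :
    ∫ θ in Ioo (-π) π, Complex.exp ((k : ℂ) * θ * Complex.I) =
      if k = 0 then ((2 * π : ℝ) : ℂ) else 0 := by
  rcases eq_or_ne k 0 with hk | hk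
  · subst hk
    rw [if_pos rfl, ← integral_theta_zero]
    refine setIntegral_congr_fun measurableSet_Ioo (fun θ _ => ?_)
    simp
  · rw [if_neg hk]
    exact integral_theta_ne k hk

lemma integrableOn_prod_mul {L : Type*} [RCLike L] {f g : ℝ → L} {s t : Set ℝ}
    (hf : IntegrableOn f s) (hg : IntegrableOn g t) :
    IntegrableOn (fun p : ℝ × ℝ => f p.1 * g p.2) (s ×ˢ t) := by
  rw [IntegrableOn, MeasureTheory.Measure.volume_eq_prod, ← Measure.prod_restrict]
  exact hf.mul_prod hg

lemma integrableOn_pow_exp (j q : ℕ) (hq : 0 < q) {α : ℝ} (hα : 0 < α) :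
    IntegrableOn (fun r : ℝ => r ^ j * Real.exp (-α * r ^ q)) (Ioi 0) := by
  have h := integrableOn_rpow_mul_exp_neg_mul_rpow (p := (q : ℝ)) (s := (j : ℝ)) (b := α)
    (by linarith [Nat.cast_nonneg (α := ℝ) j]) (Nat.cast_pos.mpr hq) hα
  refine h.congr_fun (fun r hr => ?_) measurableSet_Ioi
  simp only [Real.rpow_natCast]

lemma integral_pow_exp (m : ℕ) {ℓ : ℕ} (hℓ : 0 < ℓ) {α : ℝ} (hα : 0 < α) :
    ∫ r in Ioi (0:ℝ), r ^ (2*m+1) * Real.exp (-α * r ^ (2*ℓ)) =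
      (α ^ (-(((m:ℝ)+1)/(ℓ:ℝ))) * (1/(2*(ℓ:ℝ)))) * Real.Gamma (((m:ℝ)+1)/(ℓ:ℝ)) := by
  have h := integral_rpow_mul_exp_neg_mul_rpow (p := (2*(ℓ:ℝ))) (q := (2*(m:ℝ)+1)) (b := α)
    (mul_pos two_pos (by exact_mod_cast hℓ)) (by linarith [Nat.cast_nonneg (α := ℝ) m]) hα
  have hset : ∫ r in Ioi (0:ℝ), r ^ (2*m+1) * Real.exp (-α * r ^ (2*ℓ)) =
      ∫ r in Ioi (0:ℝ), r ^ (2*(m:ℝ)+1) * Real.exp (-α * r ^ (2*(ℓ:ℝ))) := by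
    refine setIntegral_congr_fun measurableSet_Ioi (fun r hr => ?_)
    rw [show (2*(m:ℝ)+1) = ((2*m+1 : ℕ) : ℝ) by push_cast; ring,
      show (2*(ℓ:ℝ)) = ((2*ℓ : ℕ) : ℝ) by push_cast; ring,
      Real.rpow_natCast, Real.rpow_natCast]
  rw [hset, h]
  have hℓ' : (ℓ:ℝ) ≠ 0 := Nat.cast_ne_zero.mpr hℓ.ne'
  have he : (2*(m:ℝ)+1+1) / (2*(ℓ:ℝ)) = ((m:ℝ)+1)/(ℓ:ℝ) := by field_simp; ring
  have he2 : -(2*(m:ℝ)+1+1) / (2*(ℓ:ℝ)) = -(((m:ℝ)+1)/(ℓ:ℝ)) := by field_simp; ring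
  rw [he, he2]

end BergmanAux

open BergmanAux

/-- The reproducing (Bergman) kernel of the generalized Fock space `F^{2,ℓ}_α`
is given by the explicit series `(ℓ α^{1/ℓ}/π) ∑ α^{m/ℓ} z^m w̄^m / Γ((m+1)/ℓ)`.
The kernel `K` is characterized by: `K(·,z)` belongs to the space and
`f(z) = ⟨f, K(·,z)⟩` for every `f` in the space. -/
theorem bergman_kernel_series (ℓ : ℕ) (hℓ : 0 < ℓ) (α : ℝ) (hα : 0 < α)
    (K : ℂ → ℂ → ℂ)
    (hK_mem : ∀ z : ℂ, Differentiable ℂ (fun w => K w z) ∧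
      Integrable (fun w : ℂ =>
        ‖K w z‖ ^ 2 * Real.exp (-α * ‖w‖ ^ (2 * ℓ))))
    (hK_rep : ∀ f : ℂ → ℂ, Differentiable ℂ f →
      Integrable (fun z : ℂ =>
        ‖f z‖ ^ 2 * Real.exp (-α * ‖z‖ ^ (2 * ℓ))) →
      ∀ z : ℂ, f z = ∫ w : ℂ, f w * (starRingEnd ℂ) (K w z) *
        (Real.exp (-α * ‖w‖ ^ (2 * ℓ)) : ℂ)) :
    ∀ z w : ℂ, K z w =
      (((ℓ : ℝ) * α ^ (1 / (ℓ : ℝ)) / Real.pi : ℝ) : ℂ) *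
        ∑' m : ℕ, ((α ^ ((m : ℝ) / (ℓ : ℝ)) : ℝ) : ℂ) * z ^ m *
          (starRingEnd ℂ) w ^ m / ((Real.Gamma (((m : ℝ) + 1) / (ℓ : ℝ)) : ℝ) : ℂ) := by
  intro z w
  have hπ : (0:ℝ) < π := Real.pi_pos
  have hℓR : (0:ℝ) < (ℓ:ℝ) := by exact_mod_cast hℓ
  obtain ⟨hg, hgint⟩ := hK_mem w
  -- Taylor coefficients of `K · w`
  set b : ℕ → ℂ := fun n => (n.factorial : ℂ)⁻¹ * iteratedDeriv n (fun u => K u w) 0 with hbdef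
  have hTaylor : ∀ u : ℂ, HasSum (fun n => b n * u ^ n) (K u w) := by
    intro u
    have h := Complex.hasSum_taylorSeries_of_entire hg 0 u
    have he : (fun n : ℕ => (n.factorial : ℂ)⁻¹ • (u - 0) ^ n • iteratedDeriv n (fun u => K u w) 0)
        = fun n => b n * u ^ n := by
      funext n; simp only [hbdef, sub_zero, smul_eq_mul]; ring
    rwa [he] at h
  -- summability of coefficient norms against any radius
  have hsum : ∀ R : ℝ, 0 ≤ R → Summable (fun n => ‖b n‖ * R ^ n) := by
    intro R hR
    have hM : (0:ℝ) < 2 * R + 1 := by linarith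
    have h1 : Summable (fun n => b n * ((2*R+1 : ℝ) : ℂ) ^ n) := (hTaylor _).summable
    have h0 : Tendsto (fun n => ‖b n * ((2*R+1 : ℝ) : ℂ) ^ n‖) atTop (𝓝 0) := by
      simpa using h1.tendsto_atTop_zero.norm
    have hev : ∀ᶠ n in atTop, ‖b n * ((2*R+1:ℝ):ℂ)^n‖ < 1 := h0.eventually_lt_const one_pos
    set t : ℝ := R / (2*R+1) with ht
    have ht0 : 0 ≤ t := div_nonneg hR hM.le
    have ht1 : t < 1 := by rw [ht, div_lt_one hM]; linarith
    refine summable_of_isBigO_nat (summable_geometric_of_lt_one ht0 ht1) ?_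
    refine Asymptotics.IsBigO.of_bound 1 ?_
    filter_upwards [hev] with n hn
    have hRn : R ^ n = (2*R+1)^n * t^n := by
      rw [← mul_pow, ht, mul_div_cancel₀ _ hM.ne']
    have hn' : ‖b n‖ * (2*R+1)^n < 1 := by
      rw [norm_mul, norm_pow, Complex.norm_real, Real.norm_of_nonneg hM.le] at hn
      exact hn
    have h2 : ‖b n‖ * R ^ n ≤ t ^ n := by
      have e1 : ‖b n‖ * R^n = (‖b n‖ * (2*R+1)^n) * t^n := by rw [hRn]; ring
      rw [e1]
      have h3 : (0:ℝ) ≤ t^n := pow_nonneg ht0 n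
      nlinarith [norm_nonneg (b n)]
    rw [Real.norm_of_nonneg (mul_nonneg (norm_nonneg _) (pow_nonneg hR n)),
      Real.norm_of_nonneg (pow_nonneg ht0 n), one_mul]
    exact h2

  -- the radial integrals
  have hIocUnion : (⋃ n : ℕ, Ioc (0:ℝ) (n:ℝ)) = Ioi 0 := by
    ext x
    simp only [mem_iUnion, mem_Ioc, mem_Ioi]
    constructor
    · rintro ⟨n, h1, _⟩; exact h1
    · intro hx
      obtain ⟨n, hn⟩ := exists_nat_ge x
      exact ⟨n, hx, hn⟩
  -- main computation of the Taylor coefficients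
  have hbm : ∀ m : ℕ, b m =
      (((ℓ:ℝ) * α ^ (((m:ℝ)+1)/(ℓ:ℝ)) / (π * Real.Gamma (((m:ℝ)+1)/(ℓ:ℝ))) : ℝ) : ℂ) *
        (starRingEnd ℂ) w ^ m := by
    intro m
    -- integrability of |u|^{2m} * weight
    have hmono_int : Integrable (fun u : ℂ =>
        ‖u‖ ^ (2*m) * Real.exp (-α * ‖u‖ ^ (2 * ℓ))) := by
      rw [← complex_integrableOn_polar_iff]
      have hf1 : IntegrableOn (fun r : ℝ => r ^ (2*m+1) * Real.exp (-α * r ^ (2*ℓ))) (Ioi 0) :=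
        integrableOn_pow_exp (2*m+1) (2*ℓ) (by omega) hα
      have hf2 : IntegrableOn (fun _ : ℝ => (1:ℝ)) (Ioo (-π) π) :=
        integrableOn_const measure_Ioo_lt_top.ne
      have hprod := integrableOn_prod_mul hf1 hf2
      rw [polarCoord_target]
      refine (integrableOn_congr_fun (fun p hp => ?_)
        (measurableSet_Ioi.prod measurableSet_Ioo)).mpr hprod
      have hp1 : (0:ℝ) < p.1 := hp.1
      simp only [smul_eq_mul, Complex.norm_polarCoord_symm, abs_of_pos hp1, mul_one]
      ring
    -- the monomial is in the space
    have hmint : Integrable (fun u : ℂ =>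
        ‖u ^ m‖ ^ 2 * Real.exp (-α * ‖u‖ ^ (2 * ℓ))) := by
      refine hmono_int.congr (ae_of_all _ fun u => ?_)
      simp only [map_pow, norm_pow]
      rw [← pow_mul, Nat.mul_comm]
    set F : ℂ → ℂ := fun u => (starRingEnd ℂ) u ^ m * K u w *
      ((Real.exp (-α * ‖u‖ ^ (2 * ℓ)) : ℝ) : ℂ) with hFdef
    have hconj : (starRingEnd ℂ) w ^ m = ∫ u : ℂ, F u := by
      have hrep := hK_rep (fun u => u ^ m) (differentiable_pow m) hmint w
      have h := congrArg (starRingEnd ℂ) hrep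
      rw [← integral_conj] at h
      simp only [map_mul, map_pow, Complex.conj_conj, Complex.conj_ofReal] at h
      exact h
    have hsymmc : Continuous (fun p : ℝ × ℝ => Complex.polarCoord.symm p) := by
      have hfe : (fun p : ℝ × ℝ => Complex.polarCoord.symm p)
          = fun p : ℝ × ℝ => (p.1 : ℂ) * ((Real.cos p.2 : ℝ) + (Real.sin p.2 : ℝ) * Complex.I) :=
        funext fun p => by rw [Complex.polarCoord_symm_apply]
      rw [hfe]; fun_prop
    have hconjc : Continuous fun u : ℂ => (starRingEnd ℂ) u := Complex.continuous_conj
    have hFcont : Continuous F := by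
      rw [hFdef]
      exact ((hconjc.pow m).mul hg.continuous).mul (Complex.continuous_ofReal.comp
        (Real.continuous_exp.comp (continuous_const.mul (continuous_norm.pow (2*ℓ)))))
    have hFint : Integrable F := by
      refine Integrable.mono' ((hmono_int.add hgint).div_const 2)
        hFcont.aestronglyMeasurable (ae_of_all _ fun u => ?_)
      have hE : (0:ℝ) ≤ Real.exp (-α * ‖u‖ ^ (2 * ℓ)) := (Real.exp_pos _).le
      have hnorm : ‖F u‖ = ‖u‖ ^ m * ‖K u w‖ *
          Real.exp (-α * ‖u‖ ^ (2 * ℓ)) := by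
        simp only [hFdef, norm_mul, norm_pow, Complex.norm_conj,
          Complex.norm_real, Real.norm_eq_abs, abs_of_pos (Real.exp_pos _)]
      rw [hnorm]
      have h2 : ‖u‖ ^ (2*m) = (‖u‖ ^ m)^2 := by
        rw [← pow_mul, Nat.mul_comm]
      simp only [Pi.add_apply]
      have key : (0:ℝ) ≤ (‖u‖ ^ m - ‖K u w‖)^2 *
          Real.exp (-α * ‖u‖ ^ (2 * ℓ)) :=
        mul_nonneg (sq_nonneg _) hE
      nlinarith [key, h2]
    -- polar coordinates and truncation
    have hpolar : ∫ u : ℂ, F u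
        = ∫ p in polarCoord.target, p.1 • F (Complex.polarCoord.symm p) :=
      (Complex.integral_comp_polarCoord_symm F).symm
    have hFpol : IntegrableOn (fun p : ℝ × ℝ => p.1 • F (Complex.polarCoord.symm p))
        polarCoord.target := (complex_integrableOn_polar_iff F).mpr hFint
    set S : ℕ → Set (ℝ × ℝ) := fun n => Ioc (0:ℝ) (n:ℝ) ×ˢ Ioo (-π) π with hSdef
    have hsm : ∀ n, MeasurableSet (S n) := fun n => measurableSet_Ioc.prod measurableSet_Ioo
    have hmono : Monotone S := fun i j hij =>
      prod_mono (Ioc_subset_Ioc_right (by exact_mod_cast hij)) Subset.rfl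
    have hunion : ⋃ n, S n = polarCoord.target := by
      rw [polarCoord_target, hSdef, ← iUnion_prod_const, hIocUnion]
    have htend1 : Tendsto (fun N : ℕ => ∫ p in S N, p.1 • F (Complex.polarCoord.symm p)) atTop
        (𝓝 (∫ p in polarCoord.target, p.1 • F (Complex.polarCoord.symm p))) := by
      have h := tendsto_setIntegral_of_monotone hsm hmono (hunion ▸ hFpol)
      rwa [hunion] at h
    -- evaluation of the truncated integrals
    set T : ℕ → ℝ × ℝ → ℂ := fun n p => b n * Complex.polarCoord.symm p ^ n *
      ((starRingEnd ℂ) (Complex.polarCoord.symm p) ^ m *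
        ((Real.exp (-α * p.1 ^ (2*ℓ)) : ℝ) : ℂ) * (p.1 : ℂ)) with hTdef
    have hJN : ∀ N : ℕ, ∫ p in S N, p.1 • F (Complex.polarCoord.symm p)
        = b m * ((∫ r in Ioc (0:ℝ) (N:ℝ), r ^ (2*m+1) * Real.exp (-α * r ^ (2*ℓ)) : ℝ) : ℂ) *
          ((2 * π : ℝ) : ℂ) := by
      intro N
      have hpt : ∀ p ∈ S N, p.1 • F (Complex.polarCoord.symm p) = ∑' n, T n p := by
        rintro p hp
        have hp1 : (0:ℝ) < p.1 := hp.1.1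
        have habs : ‖Complex.polarCoord.symm p‖ = p.1 := by
          rw [Complex.norm_polarCoord_symm, abs_of_pos hp1]
        have hHS : HasSum (fun n => T n p) (p.1 • F (Complex.polarCoord.symm p)) := by
          have h0 := (hTaylor (Complex.polarCoord.symm p)).mul_right
            ((starRingEnd ℂ) (Complex.polarCoord.symm p) ^ m *
              ((Real.exp (-α * p.1 ^ (2*ℓ)) : ℝ) : ℂ) * (p.1 : ℂ))
          have hval : K (Complex.polarCoord.symm p) w *
              ((starRingEnd ℂ) (Complex.polarCoord.symm p) ^ m *
                ((Real.exp (-α * p.1 ^ (2*ℓ)) : ℝ) : ℂ) * (p.1 : ℂ))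
              = p.1 • F (Complex.polarCoord.symm p) := by
            rw [hFdef]
            simp only [habs, Complex.real_smul]
            ring
          rw [hval] at h0
          exact h0
        exact hHS.tsum_eq.symm
      rw [setIntegral_congr_fun (hsm N) hpt]
      have hmeas : ∀ n, AEStronglyMeasurable (T n) (volume.restrict (S N)) := by
        intro n
        refine Continuous.aestronglyMeasurable ?_
        rw [hTdef]
        fun_prop
      have hbound : ∑' n, ∫⁻ p in S N, ‖T n p‖₊ ≠ ⊤ := by
        have hVfin : volume (S N) < ⊤ := by
          rw [hSdef]
          simp only [MeasureTheory.Measure.volume_eq_prod, Measure.prod_prod]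
          exact ENNReal.mul_lt_top measure_Ioc_lt_top measure_Ioo_lt_top
        have hptb : ∀ n : ℕ, ∀ p ∈ S N, (‖T n p‖₊ : ℝ≥0∞) ≤
            ENNReal.ofReal (‖b n‖ * (N:ℝ)^n * (N:ℝ)^(m+1)) := by
          intro n p hp
          have hp1 : (0:ℝ) < p.1 := hp.1.1
          have hpN : p.1 ≤ (N:ℝ) := hp.1.2
          have habs : ‖Complex.polarCoord.symm p‖ = p.1 := by
            rw [Complex.norm_polarCoord_symm, abs_of_pos hp1]
          have hexp1 : Real.exp (-α * p.1 ^ (2*ℓ)) ≤ 1 := by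
            rw [Real.exp_le_one_iff]
            have h : (0:ℝ) ≤ α * p.1 ^ (2*ℓ) := by positivity
            linarith
          have hnorm : ‖T n p‖ = ‖b n‖ * p.1 ^ n * p.1 ^ (m+1) *
              Real.exp (-α * p.1 ^ (2*ℓ)) := by
            simp only [hTdef, norm_mul, norm_pow, Complex.norm_conj,
              Complex.norm_real, Real.norm_eq_abs, habs, abs_of_pos (Real.exp_pos _), abs_of_pos hp1]
            rw [pow_succ]
            ring
          rw [← enorm_eq_nnnorm, ← ofReal_norm_eq_enorm]
          refine ENNReal.ofReal_le_ofReal ?_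
          rw [hnorm]
          calc ‖b n‖ * p.1 ^ n * p.1 ^ (m+1) * Real.exp (-α * p.1 ^ (2*ℓ))
              ≤ ‖b n‖ * (N:ℝ) ^ n * (N:ℝ) ^ (m+1) * 1 := by
                gcongr <;> first | exact hp1.le | exact hpN | exact hexp1 | positivity
            _ = ‖b n‖ * (N:ℝ) ^ n * (N:ℝ) ^ (m+1) := mul_one _
        have hle : ∀ n : ℕ, ∫⁻ p in S N, ‖T n p‖₊ ≤
            ENNReal.ofReal (‖b n‖ * (N:ℝ)^n * (N:ℝ)^(m+1)) * volume (S N) := by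
          intro n
          calc ∫⁻ p in S N, ‖T n p‖₊
              ≤ ∫⁻ _ in S N, ENNReal.ofReal (‖b n‖ * (N:ℝ)^n * (N:ℝ)^(m+1)) :=
                setLIntegral_mono measurable_const (hptb n)
            _ = _ := setLIntegral_const _ _
        have hsummable : Summable (fun n : ℕ => ‖b n‖ * (N:ℝ)^n * (N:ℝ)^(m+1)) :=
          (hsum (N:ℝ) (Nat.cast_nonneg N)).mul_right ((N:ℝ)^(m+1))
        have hnn : ∀ n : ℕ, 0 ≤ ‖b n‖ * (N:ℝ)^n * (N:ℝ)^(m+1) := fun n => by positivity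
        refine ne_of_lt (lt_of_le_of_lt (ENNReal.tsum_le_tsum hle) ?_)
        rw [ENNReal.tsum_mul_right, ← ENNReal.ofReal_tsum_of_nonneg hnn hsummable]
        exact ENNReal.mul_lt_top ENNReal.ofReal_lt_top hVfin
      rw [integral_tsum hmeas hbound]
      have hsplit : ∀ n : ℕ, ∫ p in S N, T n p =
          (∫ r in Ioc (0:ℝ) (N:ℝ), b n * ((r ^ (n+m+1) * Real.exp (-α * r ^ (2*ℓ)) : ℝ) : ℂ)) *
          (∫ θ in Ioo (-π) π, Complex.exp ((((n:ℤ) - (m:ℤ) : ℤ) : ℂ) * θ * Complex.I)) := by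
        intro n
        have heq : ∀ p ∈ S N, T n p =
            (fun r : ℝ => b n * ((r ^ (n+m+1) * Real.exp (-α * r ^ (2*ℓ)) : ℝ) : ℂ)) p.1 *
            (fun θ : ℝ => Complex.exp ((((n:ℤ) - (m:ℤ) : ℤ) : ℂ) * θ * Complex.I)) p.2 := by
          rintro p hp
          have hp1 : (0:ℝ) < p.1 := hp.1.1
          have hsymm : Complex.polarCoord.symm p
              = (p.1 : ℂ) * Complex.exp ((p.2 : ℂ) * Complex.I) := by
            rw [Complex.polarCoord_symm_apply, Complex.exp_mul_I, ← Complex.ofReal_cos,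
              ← Complex.ofReal_sin]
          have hconjsymm : (starRingEnd ℂ) (Complex.polarCoord.symm p)
              = (p.1 : ℂ) * Complex.exp (-((p.2 : ℂ) * Complex.I)) := by
            rw [hsymm, map_mul, Complex.conj_ofReal, ← Complex.exp_conj]
            congr 2
            simp only [map_mul, Complex.conj_ofReal, Complex.conj_I]
            ring
          have hexp : Complex.exp ((p.2:ℂ) * Complex.I) ^ n *
              Complex.exp (-((p.2:ℂ) * Complex.I)) ^ m
              = Complex.exp ((((n:ℤ) - (m:ℤ) : ℤ) : ℂ) * (p.2:ℂ) * Complex.I) := by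
            rw [← Complex.exp_nat_mul, ← Complex.exp_nat_mul, ← Complex.exp_add]
            congr 1
            push_cast
            ring
          simp only [hTdef]
          rw [hconjsymm, hsymm, mul_pow, mul_pow, ← hexp]
          push_cast
          ring
        rw [setIntegral_congr_fun (hsm N) heq, hSdef, MeasureTheory.Measure.volume_eq_prod]
        exact setIntegral_prod_mul
          (fun r : ℝ => b n * ((r ^ (n+m+1) * Real.exp (-α * r ^ (2*ℓ)) : ℝ) : ℂ))
          (fun θ : ℝ => Complex.exp ((((n:ℤ) - (m:ℤ) : ℤ) : ℂ) * θ * Complex.I))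
          (Ioc (0:ℝ) (N:ℝ)) (Ioo (-π) π)
      have hterm0 : ∀ n : ℕ, n ≠ m → ∫ p in S N, T n p = 0 := by
        intro n hn
        rw [hsplit n, integral_theta ((n:ℤ) - m),
          if_neg (sub_ne_zero.mpr (by exact_mod_cast hn : (n:ℤ) ≠ (m:ℤ))), mul_zero]
      have htermm : ∫ p in S N, T m p
          = b m * ((∫ r in Ioc (0:ℝ) (N:ℝ), r ^ (2*m+1) * Real.exp (-α * r ^ (2*ℓ)) : ℝ) : ℂ) *
            ((2 * π : ℝ) : ℂ) := by
        rw [hsplit m, integral_theta ((m:ℤ) - (m:ℤ)), if_pos (sub_self (m:ℤ))]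
        congr 1
        rw [MeasureTheory.integral_const_mul]
        congr 1
        simp_rw [show m+m+1 = 2*m+1 from by omega]
        exact integral_ofReal
      rw [tsum_eq_single m (fun n hn => hterm0 n hn)]
      exact htermm
    -- pass to the limit
    have hGint : IntegrableOn (fun r : ℝ => r ^ (2*m+1) * Real.exp (-α * r ^ (2*ℓ))) (Ioi 0) :=
      integrableOn_pow_exp _ _ (by omega) hα
    set GN : ℝ := ∫ r in Ioi (0:ℝ), r ^ (2*m+1) * Real.exp (-α * r ^ (2*ℓ)) with hGNdef
    have htendG : Tendsto
        (fun N : ℕ => ∫ r in Ioc (0:ℝ) (N:ℝ), r ^ (2*m+1) * Real.exp (-α * r ^ (2*ℓ)))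
        atTop (𝓝 GN) := by
      have h := tendsto_setIntegral_of_monotone (fun n : ℕ => measurableSet_Ioc)
        (fun i j hij => Ioc_subset_Ioc_right (by exact_mod_cast hij)) (hIocUnion ▸ hGint)
      rwa [hIocUnion] at h
    have htend2 : Tendsto (fun N : ℕ => b m *
        ((∫ r in Ioc (0:ℝ) (N:ℝ), r ^ (2*m+1) * Real.exp (-α * r ^ (2*ℓ)) : ℝ) : ℂ) *
        ((2 * π : ℝ) : ℂ)) atTop (𝓝 (b m * (GN : ℂ) * ((2 * π : ℝ) : ℂ))) := by
      refine Tendsto.mul_const _ (Tendsto.const_mul _ ?_)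
      exact (Complex.continuous_ofReal.tendsto _).comp htendG
    have hJ : (starRingEnd ℂ) w ^ m = b m * (GN : ℂ) * ((2 * π : ℝ) : ℂ) := by
      rw [hconj, hpolar]
      refine tendsto_nhds_unique ?_ htend2
      have h := htend1
      simp only [hJN] at h
      exact h
    -- solve for `b m`
    have hΓpos : 0 < Real.Gamma (((m:ℝ)+1)/(ℓ:ℝ)) :=
      Real.Gamma_pos_of_pos (div_pos (by positivity) hℓR)
    have hGval : GN = (α ^ (-(((m:ℝ)+1)/(ℓ:ℝ))) * (1/(2*(ℓ:ℝ)))) *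
        Real.Gamma (((m:ℝ)+1)/(ℓ:ℝ)) := integral_pow_exp m hℓ hα
    set c : ℝ := (ℓ:ℝ) * α ^ (((m:ℝ)+1)/(ℓ:ℝ)) / (π * Real.Gamma (((m:ℝ)+1)/(ℓ:ℝ))) with hcdef
    have hc : c * (GN * (2*π)) = 1 := by
      rw [hcdef, hGval, Real.rpow_neg hα.le]
      have h1 : α ^ (((m:ℝ)+1)/(ℓ:ℝ)) ≠ 0 := (Real.rpow_pos_of_pos hα _).ne'
      field_simp
    have hkey : ((GN * (2*π) : ℝ) : ℂ) * ((c : ℝ) : ℂ) = 1 := by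
      rw [← Complex.ofReal_mul, mul_comm (GN * (2*π)), hc, Complex.ofReal_one]
    calc b m = b m * (((GN * (2*π) : ℝ) : ℂ) * ((c : ℝ) : ℂ)) := by rw [hkey, mul_one]
      _ = (b m * (GN:ℂ) * ((2 * π : ℝ) : ℂ)) * ((c : ℝ) : ℂ) := by push_cast; ring
      _ = (starRingEnd ℂ) w ^ m * ((c : ℝ) : ℂ) := by rw [← hJ]
      _ = ((c : ℝ) : ℂ) * (starRingEnd ℂ) w ^ m := mul_comm _ _
  -- assemble the series
  rw [← (hTaylor z).tsum_eq, ← tsum_mul_left]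
  refine tsum_congr fun n => ?_
  rw [hbm n]
  have hΓ : Real.Gamma (((n:ℝ)+1)/(ℓ:ℝ)) ≠ 0 :=
    (Real.Gamma_pos_of_pos (div_pos (by positivity) hℓR)).ne'
  have hr : α ^ (((n:ℝ)+1)/(ℓ:ℝ)) = α ^ (1/(ℓ:ℝ)) * α ^ ((n:ℝ)/(ℓ:ℝ)) := by
    rw [← Real.rpow_add hα]
    congr 1
    field_simp
    ring
  rw [hr]
  have hπ' : ((π : ℝ) : ℂ) ≠ 0 := Complex.ofReal_ne_zero.mpr hπ.ne'
  have hΓ' : ((Real.Gamma (((n:ℝ)+1)/(ℓ:ℝ)) : ℝ) : ℂ) ≠ 0 := Complex.ofReal_ne_zero.mpr hΓ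
  push_cast
  field_simp
end
end
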